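/- arXiv:1609.05988 — 5 statements merged into one kernel-verified Lean document; each statement's English description precedes it below -/
import Mathlib

section
/- (Jensen's formula.) Define the generalized binomial coefficient C(a, m) = a(a−1)⋯(a−m+1)/m! for a real number a and a nonnegative integer m. Then for all real numbers j and r, every positive integer p, and every integer n ≥ 0, Σ_{l=0}^{n} C(j+pl, l) · C(r−pl, n−l) = Σ_{i=0}^{n} C(j+r−i, n−i) · p^i. -/
open Finset

/-- The generalized binomial coefficient `C(a, m) = a(a−1)⋯(a−m+1)/m!` for a real
number `a` and a natural number `m`, with `C(a, 0) = 1`. -/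
noncomputable def genChoose (a : ℝ) (m : ℕ) : ℝ :=
  (∏ i ∈ Finset.range m, (a - (i : ℝ))) / (m.factorial : ℝ)

lemma genChoose_zero (a : ℝ) : genChoose a 0 = 1 := by simp [genChoose]

lemma genChoose_one (a : ℝ) : genChoose a 1 = a := by simp [genChoose]

lemma genChoose_pascal (a : ℝ) (m : ℕ) :
    genChoose (a + 1) (m + 1) = genChoose a (m + 1) + genChoose a m := by
  unfold genChoose
  rw [Finset.prod_range_succ' (fun i => a + 1 - (i : ℝ)), Finset.prod_range_succ (fun i => a - (i : ℝ))]
  have h1 : ∀ i : ℕ, a + 1 - ((i + 1 : ℕ) : ℝ) = a - i := by intro i; push_cast; ring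
  rw [Finset.prod_congr rfl (fun i _ => h1 i)]
  have hm : (m.factorial : ℝ) ≠ 0 := Nat.cast_ne_zero.mpr m.factorial_ne_zero
  have hm1 : ((m + 1).factorial : ℝ) = (m + 1) * m.factorial := by
    rw [Nat.factorial_succ]; push_cast; ring
  rw [hm1]
  field_simp
  ring

lemma genChoose_catalan (p : ℕ) (k : ℕ) :
    genChoose ((p : ℝ) * (k + 1)) (k + 1) = p * genChoose ((p : ℝ) * (k + 1) - 1) k := by
  unfold genChoose
  rw [Finset.prod_range_succ' (fun i => (p : ℝ) * (k + 1) - (i : ℝ))]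
  have h1 : ∀ i : ℕ, (p : ℝ) * (k + 1) - ((i + 1 : ℕ) : ℝ) = (p : ℝ) * (k + 1) - 1 - i := by
    intro i; push_cast; ring
  rw [Finset.prod_congr rfl (fun i _ => h1 i)]
  have hk : (k.factorial : ℝ) ≠ 0 := Nat.cast_ne_zero.mpr k.factorial_ne_zero
  have hk1 : ((k + 1).factorial : ℝ) = (k + 1) * k.factorial := by
    rw [Nat.factorial_succ]; push_cast; ring
  rw [hk1]
  field_simp
  ring

noncomputable def auxA (p : ℕ) (x : ℝ) : ℕ → ℝ
  | 0 => 1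
  | (k + 1) => genChoose (x + (p : ℝ) * (k + 1)) (k + 1) - p * genChoose (x + (p : ℝ) * (k + 1) - 1) k

lemma auxA_zero_succ (p : ℕ) (k : ℕ) : auxA p 0 (k + 1) = 0 := by
  simp only [auxA]
  have h := genChoose_catalan p k
  ring_nf at h ⊢
  linear_combination h

lemma auxA_succ (p : ℕ) (x : ℝ) (k : ℕ) :
    auxA p (x + 1) (k + 1) = auxA p x (k + 1) + auxA p (x + (p : ℝ)) k := by
  cases k with
  | zero => simp [auxA, genChoose_one, genChoose_zero]
  | succ k =>
    simp only [auxA]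
    have h1 := genChoose_pascal (x + (p : ℝ) * ((k : ℝ) + 1 + 1)) (k + 1)
    have h2 := genChoose_pascal (x + (p : ℝ) * ((k : ℝ) + 1 + 1) - 1) k
    push_cast
    ring_nf
    ring_nf at h1 h2
    linear_combination h1 - (p : ℝ) * h2

noncomputable def auxB (p : ℕ) (x y : ℝ) (n : ℕ) : ℝ :=
  ∑ k ∈ Finset.range (n + 1), auxA p x k * genChoose (y - (p : ℝ) * k) (n - k)

lemma auxB_base (p : ℕ) (y : ℝ) (n : ℕ) : auxB p 0 y n = genChoose y n := by
  unfold auxB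
  rw [Finset.sum_eq_single 0]
  · simp [auxA]
  · intro k hk hne
    obtain ⟨k, rfl⟩ := Nat.exists_eq_succ_of_ne_zero hne
    rw [auxA_zero_succ, zero_mul]
  · intro h; exact absurd (Finset.mem_range.mpr (Nat.succ_pos n)) h

lemma auxB_succ (p : ℕ) (x y : ℝ) (n : ℕ) :
    auxB p (x + 1) y (n + 1) = auxB p x y (n + 1) + auxB p (x + (p : ℝ)) (y - (p : ℝ)) n := by
  unfold auxB
  rw [Finset.sum_range_succ' (fun k => auxA p (x + 1) k * genChoose (y - (p : ℝ) * k) (n + 1 - k)),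
      Finset.sum_range_succ' (fun k => auxA p x k * genChoose (y - (p : ℝ) * k) (n + 1 - k))]
  have key : ∀ k ∈ Finset.range (n + 1),
      auxA p (x + 1) (k + 1) * genChoose (y - (p : ℝ) * ((k : ℕ) + 1 : ℕ)) (n + 1 - (k + 1))
      = auxA p x (k + 1) * genChoose (y - (p : ℝ) * ((k : ℕ) + 1 : ℕ)) (n + 1 - (k + 1))
        + auxA p (x + (p : ℝ)) k * genChoose (y - (p : ℝ) - (p : ℝ) * k) (n - k) := by
    intro k _
    rw [auxA_succ, Nat.succ_sub_succ]
    rw [show y - (p : ℝ) * ((k : ℕ) + 1 : ℕ) = y - (p : ℝ) - (p : ℝ) * k from by push_cast; ring]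
    ring
  rw [Finset.sum_congr rfl key, Finset.sum_add_distrib]
  simp only [auxA]
  push_cast
  ring

open Polynomial in
lemma exists_poly_genChoose (c : ℝ) (m : ℕ) :
    ∃ P : Polynomial ℝ, ∀ x : ℝ, P.eval x = genChoose (x + c) m := by
  refine ⟨Polynomial.C ((m.factorial : ℝ))⁻¹ *
    ∏ i ∈ Finset.range m, (Polynomial.X + Polynomial.C (c - (i : ℝ))), fun x => ?_⟩
  rw [Polynomial.eval_mul, Polynomial.eval_C, Polynomial.eval_prod]
  unfold genChoose
  rw [div_eq_inv_mul]
  congr 1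
  exact Finset.prod_congr rfl (fun i _ => by
    rw [Polynomial.eval_add, Polynomial.eval_X, Polynomial.eval_C]; ring)

lemma exists_poly_auxA (p : ℕ) (k : ℕ) : ∃ P : Polynomial ℝ, ∀ x : ℝ, P.eval x = auxA p x k := by
  cases k with
  | zero => exact ⟨1, by simp [auxA]⟩
  | succ k =>
    obtain ⟨P1, h1⟩ := exists_poly_genChoose ((p : ℝ) * ((k : ℝ) + 1)) (k + 1)
    obtain ⟨P2, h2⟩ := exists_poly_genChoose ((p : ℝ) * ((k : ℝ) + 1) - 1) k
    refine ⟨P1 - Polynomial.C (p : ℝ) * P2, fun x => ?_⟩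
    simp only [Polynomial.eval_sub, Polynomial.eval_mul, Polynomial.eval_C, h1, h2, auxA]
    rw [show x + ((p : ℝ) * ((k : ℝ) + 1) - 1) = x + (p : ℝ) * ((k : ℝ) + 1) - 1 from by ring]

lemma exists_poly_auxB (p : ℕ) (y : ℝ) (n : ℕ) :
    ∃ P : Polynomial ℝ, ∀ x : ℝ, P.eval x = auxB p x y n := by
  choose Pk hPk using exists_poly_auxA p
  refine ⟨∑ k ∈ Finset.range (n + 1), Pk k * Polynomial.C (genChoose (y - (p : ℝ) * k) (n - k)),
    fun x => ?_⟩
  rw [Polynomial.eval_finset_sum]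
  unfold auxB
  exact Finset.sum_congr rfl fun k _ => by rw [Polynomial.eval_mul, Polynomial.eval_C, hPk]

lemma eval_eq_zero_of_nat (P : Polynomial ℝ) (h : ∀ m : ℕ, P.eval (m : ℝ) = 0) (x : ℝ) :
    P.eval x = 0 := by
  have hsub : Set.range ((↑) : ℕ → ℝ) ⊆ {x | P.IsRoot x} := by
    rintro _ ⟨m, rfl⟩; exact h m
  have : P = 0 :=
    Polynomial.eq_zero_of_infinite_isRoot P
      ((Set.infinite_range_of_injective Nat.cast_injective).mono hsub)
  simp [this]

lemma hagen_rothe (p : ℕ) : ∀ (n : ℕ) (x y : ℝ), auxB p x y n = genChoose (x + y) n := by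
  intro n
  induction n with
  | zero => intro x y; simp [auxB, auxA, genChoose]
  | succ n ih =>
    have step : ∀ (x y : ℝ), auxB p (x + 1) y (n + 1) = auxB p x y (n + 1) + genChoose (x + y) n := by
      intro x y
      rw [auxB_succ, ih (x + (p : ℝ)) (y - (p : ℝ)),
        show x + (p : ℝ) + (y - (p : ℝ)) = x + y from by ring]
    intro x y
    have hnat : ∀ m : ℕ, auxB p (m : ℝ) y (n + 1) = genChoose ((m : ℝ) + y) (n + 1) := by
      intro m
      induction m with
      | zero => simpa using auxB_base p y (n + 1)
      | succ m ihm =>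
        push_cast
        rw [step (m : ℝ) y, ihm,
          show (m : ℝ) + 1 + y = ((m : ℝ) + y) + 1 from by ring, genChoose_pascal]
    obtain ⟨P, hP⟩ := exists_poly_auxB p y (n + 1)
    obtain ⟨Q, hQ⟩ := exists_poly_genChoose y (n + 1)
    have hz := eval_eq_zero_of_nat (P - Q) (fun m => by
      rw [Polynomial.eval_sub, hP, hQ, hnat m, sub_eq_zero]) x
    rw [Polynomial.eval_sub, hP, hQ, sub_eq_zero] at hz
    exact hz

noncomputable def auxH (p : ℕ) (s : ℝ) (n : ℕ) : ℝ :=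
  ∑ i ∈ Finset.range (n + 1), genChoose (s - i) (n - i) * (p : ℝ) ^ i

lemma auxH_succ (p : ℕ) (s : ℝ) (n : ℕ) :
    auxH p s (n + 1) = genChoose s (n + 1) + p * auxH p (s - 1) n := by
  unfold auxH
  rw [Finset.sum_range_succ' (fun i => genChoose (s - i) (n + 1 - i) * (p : ℝ) ^ i)]
  rw [Finset.mul_sum, add_comm]
  congr 1
  · simp
  · apply Finset.sum_congr rfl
    intro i _
    push_cast
    rw [show s - ((i : ℝ) + 1) = s - 1 - i from by ring]
    ring

lemma jensen_aux (p : ℕ) : ∀ (n : ℕ) (j r : ℝ),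
    ∑ l ∈ Finset.range (n + 1),
        genChoose (j + (p : ℝ) * (l : ℝ)) l * genChoose (r - (p : ℝ) * (l : ℝ)) (n - l)
      = auxH p (j + r) n := by
  intro n
  induction n with
  | zero => intro j r; simp [auxH, genChoose]
  | succ n ih =>
    intro j r
    have decomp :
        ∑ l ∈ Finset.range (n + 1 + 1),
            genChoose (j + (p : ℝ) * (l : ℝ)) l * genChoose (r - (p : ℝ) * (l : ℝ)) (n + 1 - l)
        = auxB p j r (n + 1)
          + p * ∑ l ∈ Finset.range (n + 1),
              genChoose ((j + (p : ℝ) - 1) + (p : ℝ) * (l : ℝ)) l *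
                genChoose ((r - (p : ℝ)) - (p : ℝ) * (l : ℝ)) (n - l) := by
      unfold auxB
      rw [Finset.sum_range_succ'
            (fun l => genChoose (j + (p : ℝ) * (l : ℝ)) l * genChoose (r - (p : ℝ) * (l : ℝ)) (n + 1 - l)),
          Finset.sum_range_succ'
            (fun k => auxA p j k * genChoose (r - (p : ℝ) * k) (n + 1 - k)),
          Finset.mul_sum]
      have key : ∀ k ∈ Finset.range (n + 1),
          genChoose (j + (p : ℝ) * ((k : ℕ) + 1 : ℕ)) (k + 1) *
              genChoose (r - (p : ℝ) * ((k : ℕ) + 1 : ℕ)) (n + 1 - (k + 1))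
          = auxA p j (k + 1) * genChoose (r - (p : ℝ) * ((k : ℕ) + 1 : ℕ)) (n + 1 - (k + 1))
            + (p : ℝ) * (genChoose ((j + (p : ℝ) - 1) + (p : ℝ) * k) k *
                genChoose ((r - (p : ℝ)) - (p : ℝ) * k) (n - k)) := by
        intro k _
        simp only [auxA, Nat.succ_sub_succ]
        rw [show r - (p : ℝ) * ((k : ℕ) + 1 : ℕ) = (r - (p : ℝ)) - (p : ℝ) * k from by push_cast; ring,
            show j + (p : ℝ) * ((k : ℕ) + 1 : ℕ) = j + (p : ℝ) * ((k : ℝ) + 1) from by push_cast; ring,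
            show j + (p : ℝ) * ((k : ℝ) + 1) - 1 = (j + (p : ℝ) - 1) + (p : ℝ) * k from by ring]
        ring
      rw [Finset.sum_congr rfl key, Finset.sum_add_distrib]
      simp only [auxA, genChoose_zero]
      push_cast
      ring
    rw [decomp, hagen_rothe p (n + 1) j r, ih (j + (p : ℝ) - 1) (r - (p : ℝ)),
      show j + (p : ℝ) - 1 + (r - (p : ℝ)) = j + r - 1 from by ring, auxH_succ]

/-- Jensen's formula: for all real `j`, `r`, every positive integer `p` and `n ≥ 0`,
`∑_{l=0}^{n} C(j+pl, l)·C(r−pl, n−l) = ∑_{i=0}^{n} C(j+r−i, n−i)·pⁱ`. -/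
theorem jensen_formula (j r : ℝ) (p : ℕ) (hp : 1 ≤ p) (n : ℕ) :
    ∑ l ∈ Finset.range (n + 1),
        genChoose (j + (p : ℝ) * (l : ℝ)) l * genChoose (r - (p : ℝ) * (l : ℝ)) (n - l) =
      ∑ i ∈ Finset.range (n + 1), genChoose (j + r - (i : ℝ)) (n - i) * (p : ℝ) ^ i := by
  exact jensen_aux p n j r
end

section
/- Let p ≥ 2 be an integer and let i and j be nonnegative integers with i < j. Then the formal power series Σ_{n≥0} ((pn+i)! / (n!·((p−1)n+j)!)) · x^n · (1+x)^{−(pn+i+1)} over ℚ is a polynomial in x of degree exactly j−i−1, where (1+x)^{−(pn+i+1)} denotes the inverse of the power series (1+x)^{pn+i+1} in ℚ[[x]]. -/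
open PowerSeries

section FussCatalanAux

open Finset

lemma prod_factorial_ratio (B d : ℕ) :
    (B.factorial : ℚ) * ∏ t ∈ Finset.range d, ((B : ℚ) + 1 + t) = ((B + d).factorial : ℚ) := by
  induction d with
  | zero => simp
  | succ d ih =>
    rw [Finset.prod_range_succ, ← mul_assoc, ih]
    have : B + (d + 1) = (B + d) + 1 := by omega
    rw [this, Nat.factorial_succ]
    push_cast
    ring

lemma pascal_sum (m : ℕ) (f : ℕ → ℚ) :
    ∑ n ∈ Finset.range (m + 2), (-1 : ℚ) ^ n * ((m + 1).choose n) * f n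
      = ∑ n ∈ Finset.range (m + 1), (-1 : ℚ) ^ n * (m.choose n) * (f n - f (n + 1)) := by
  have h2 : ∑ n ∈ Finset.range (m + 2), (-1 : ℚ) ^ n * (m.choose n) * f n
      = ∑ n ∈ Finset.range (m + 1), (-1 : ℚ) ^ n * (m.choose n) * f n := by
    rw [Finset.sum_range_succ, Nat.choose_succ_self]
    simp
  have h1 : ∑ n ∈ Finset.range (m + 2), (-1 : ℚ) ^ n * (m.choose n) * f n
      = (∑ k ∈ Finset.range (m + 1), (-1 : ℚ) ^ (k + 1) * (m.choose (k + 1)) * f (k + 1)) + f 0 := by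
    rw [Finset.sum_range_succ']
    simp
  calc ∑ n ∈ Finset.range (m + 2), (-1 : ℚ) ^ n * ((m + 1).choose n) * f n
      = (∑ k ∈ Finset.range (m + 1), (-1 : ℚ) ^ (k + 1) * ((m + 1).choose (k + 1)) * f (k + 1)) + f 0 := by
        rw [Finset.sum_range_succ']
        simp
    _ = (∑ k ∈ Finset.range (m + 1),
          ((-1 : ℚ) ^ (k + 1) * (m.choose k) * f (k + 1)
            + (-1 : ℚ) ^ (k + 1) * (m.choose (k + 1)) * f (k + 1))) + f 0 := by
        congr 1
        refine Finset.sum_congr rfl fun k _ => ?_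
        rw [Nat.choose_succ_succ]
        push_cast
        ring
    _ = (∑ k ∈ Finset.range (m + 1), (-1 : ℚ) ^ (k + 1) * (m.choose k) * f (k + 1))
        + ((∑ n ∈ Finset.range (m + 1), (-1 : ℚ) ^ n * (m.choose n) * f n) - f 0) + f 0 := by
        rw [Finset.sum_add_distrib]
        congr 1
        rw [← h2, h1]
        ring
    _ = ∑ n ∈ Finset.range (m + 1), (-1 : ℚ) ^ n * (m.choose n) * (f n - f (n + 1)) := by
        rw [add_assoc, sub_add_cancel, ← Finset.sum_add_distrib]
        refine Finset.sum_congr rfl fun k _ => ?_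
        ring

lemma alt_poly : ∀ (m : ℕ) (P : Polynomial ℚ), P.degree < m →
    ∑ n ∈ Finset.range (m + 1), (-1 : ℚ) ^ n * (m.choose n) * P.eval (n : ℚ) = 0 := by
  intro m
  induction m with
  | zero =>
    intro P hP
    have : P = 0 := by
      rw [← Polynomial.degree_eq_bot]
      exact Nat.WithBot.lt_zero_iff.mp (by exact_mod_cast hP)
    simp [this]
  | succ m ih =>
    intro P hP
    set Q : Polynomial ℚ := P - P.comp (Polynomial.X + Polynomial.C 1) with hQ
    have hdeg : Q.degree < m := by
      by_cases h0 : P = 0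
      · simp [hQ, h0]
      · have hnd : P.natDegree ≤ m := by
          have := (Polynomial.natDegree_lt_iff_degree_lt h0).mpr (by exact_mod_cast hP)
          omega
        have hq1 : (Polynomial.X + Polynomial.C (1:ℚ)).natDegree = 1 := Polynomial.natDegree_X_add_C 1
        have hlc : (P.comp (Polynomial.X + Polynomial.C 1)).leadingCoeff = P.leadingCoeff := by
          rw [Polynomial.leadingCoeff_comp (by rw [hq1]; norm_num),
            Polynomial.leadingCoeff_X_add_C, one_pow, mul_one]
        have hc0 : P.comp (Polynomial.X + Polynomial.C 1) ≠ 0 := by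
          intro h
          apply h0
          rw [← Polynomial.leadingCoeff_eq_zero, ← hlc, h, Polynomial.leadingCoeff_zero]
        have hdeq : P.degree = (P.comp (Polynomial.X + Polynomial.C 1)).degree := by
          rw [Polynomial.degree_eq_natDegree h0, Polynomial.degree_eq_natDegree hc0,
            Polynomial.natDegree_comp, hq1, mul_one]
        have hlt : Q.degree < P.degree := Polynomial.degree_sub_lt hdeq h0 hlc.symm
        have hle : P.degree ≤ (m : WithBot ℕ) :=
          Polynomial.natDegree_le_iff_degree_le.mp hnd
        exact lt_of_lt_of_le hlt hle
    have := ih Q hdeg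
    rw [pascal_sum]
    rw [← this]
    refine Finset.sum_congr rfl fun n _ => ?_
    have hev : Q.eval (n : ℚ) = P.eval (n : ℚ) - P.eval ((n : ℚ) + 1) := by
      simp [hQ]
    rw [hev]
    push_cast
    ring

lemma alt_inv (a : ℚ) (ha : 0 < a) : ∀ (m : ℕ) (b : ℚ), 0 < b →
    ∑ n ∈ Finset.range (m + 1), (-1 : ℚ) ^ n * (m.choose n) / (a * n + b)
      = m.factorial * a ^ m / ∏ t ∈ Finset.range (m + 1), (a * t + b) := by
  intro m
  induction m with
  | zero => intro b hb; simp
  | succ m ih =>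
    intro b hb
    have hpos : ∀ (b' : ℚ), 0 < b' → ∀ t : ℕ, 0 < a * t + b' := by
      intro b' hb' t
      have : (0:ℚ) ≤ a * t := by positivity
      linarith
    have key := pascal_sum m (fun n => 1 / (a * n + b))
    have lhs_eq : ∑ n ∈ Finset.range (m + 1 + 1), (-1 : ℚ) ^ n * ((m+1).choose n) / (a * n + b)
        = ∑ n ∈ Finset.range (m + 2), (-1 : ℚ) ^ n * ((m+1).choose n) * (1 / (a * n + b)) := by
      refine Finset.sum_congr rfl fun n _ => ?_
      ring
    rw [lhs_eq, key]
    have split : ∑ n ∈ Finset.range (m + 1), (-1 : ℚ) ^ n * (m.choose n) *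
          ((fun n : ℕ => 1 / (a * n + b)) n - (fun n : ℕ => 1 / (a * n + b)) (n + 1))
        = (∑ n ∈ Finset.range (m + 1), (-1 : ℚ) ^ n * (m.choose n) / (a * n + b))
          - ∑ n ∈ Finset.range (m + 1), (-1 : ℚ) ^ n * (m.choose n) / (a * n + (a + b)) := by
      rw [← Finset.sum_sub_distrib]
      refine Finset.sum_congr rfl fun n _ => ?_
      have : a * ((n : ℚ) + 1) + b = a * n + (a + b) := by ring
      push_cast
      rw [this]
      ring
    rw [split, ih b hb, ih (a + b) (by linarith)]
    set A := ∏ t ∈ Finset.range (m + 1), (a * t + b) with hA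
    set B := ∏ t ∈ Finset.range (m + 1), (a * t + (a + b)) with hB
    set D := ∏ t ∈ Finset.range (m + 2), (a * t + b) with hD
    have hApos : 0 < A := Finset.prod_pos fun t _ => hpos b hb t
    have hBpos : 0 < B := Finset.prod_pos fun t _ => hpos (a+b) (by linarith) t
    have hDpos : 0 < D := Finset.prod_pos fun t _ => hpos b hb t
    have hD1 : D = A * (a * (m + 1) + b) := by
      rw [hD, Finset.prod_range_succ, hA]
      push_cast
      ring
    have hD2 : D = b * B := by
      rw [hD, Finset.prod_range_succ', hB]
      have : ∀ k ∈ Finset.range (m+1), a * ((k:ℕ) + 1 : ℕ) + b = a * k + (a + b) := by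
        intro k _
        push_cast
        ring
      rw [Finset.prod_congr rfl this]
      push_cast
      ring
    rw [div_sub_div _ _ (ne_of_gt hApos) (ne_of_gt hBpos),
      div_eq_div_iff (by positivity) (ne_of_gt hDpos)]
    rw [Nat.factorial_succ]
    push_cast
    linear_combination (((m.factorial : ℚ) * a ^ m) * B) * hD1 - (((m.factorial : ℚ) * a ^ m) * A) * hD2

lemma rescale_neg_one_sub : rescale (-1 : ℚ) (1 - X) = 1 + X := by
  ext n
  rw [coeff_rescale]
  rcases n with _ | n
  · simp
  · rcases n with _ | n <;> simp [coeff_one, PowerSeries.coeff_X]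

lemma coeff_inv_one_add_pow (k r : ℕ) :
    (coeff (R := ℚ) r) (((1 + X : PowerSeries ℚ) ^ (k + 1))⁻¹)
      = (-1 : ℚ) ^ r * ((k + r).choose r) := by
  have h1 : ((1 - X : PowerSeries ℚ) ^ (k + 1)) *
      (PowerSeries.mk fun n => ((k + n).choose k : ℚ)) = 1 := by
    rw [← invOneSubPow_val_succ_eq_mk_add_choose, ← invOneSubPow_inv_eq_one_sub_pow]
    exact (invOneSubPow ℚ (k + 1)).inv_val
  have h2 : ((1 + X : PowerSeries ℚ) ^ (k + 1)) *
      (rescale (-1 : ℚ) (PowerSeries.mk fun n => ((k + n).choose k : ℚ))) = 1 := by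
    have h := congrArg (rescale (-1 : ℚ)) h1
    rw [map_mul, map_pow, rescale_neg_one_sub, map_one] at h
    exact h
  have h3 : ((1 + X : PowerSeries ℚ) ^ (k + 1))⁻¹
      = rescale (-1 : ℚ) (PowerSeries.mk fun n => ((k + n).choose k : ℚ)) := by
    rw [PowerSeries.inv_eq_iff_mul_eq_one]
    · rw [mul_comm] at h2; exact h2
    · rw [map_pow]
      simp
  rw [h3, coeff_rescale, coeff_mk, Nat.choose_symm_add]

noncomputable def Aco (p i j m : ℕ) : ℚ :=
  ∑ n ∈ Finset.range (m + 1), (-1 : ℚ) ^ (m - n) *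
    ((((p - 1) * n + i + m).factorial : ℚ) /
      ((n.factorial : ℚ) * ((m - n).factorial : ℚ) * ((((p - 1) * n + j).factorial : ℚ))))

lemma sum_eq_Aco (p i j : ℕ) (hp : 2 ≤ p) (m : ℕ) :
    (∑ n ∈ Finset.range (m + 1),
        (((p * n + i).factorial : ℚ) /
            ((n.factorial : ℚ) * (((p - 1) * n + j).factorial : ℚ))) *
          coeff (R := ℚ) m (X ^ n * ((1 + X : PowerSeries ℚ) ^ (p * n + i + 1))⁻¹))
      = Aco p i j m := by
  rw [Aco]
  refine Finset.sum_congr rfl fun n hn => ?_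
  have hn' : n ≤ m := by
    simp only [Finset.mem_range] at hn; omega
  have hpn : (p - 1) * n + n = p * n := by
    have h1 : p - 1 + 1 = p := by omega
    rw [← Nat.succ_mul]
    congr 1
  have hE : p * n + i + (m - n) = (p - 1) * n + i + m := by omega
  have hcoeff : coeff (R := ℚ) m (X ^ n * ((1 + X : PowerSeries ℚ) ^ (p * n + i + 1))⁻¹)
      = (-1 : ℚ) ^ (m - n) * ((p * n + i + (m - n)).choose (m - n)) := by
    rw [PowerSeries.coeff_X_pow_mul', if_pos hn', coeff_inv_one_add_pow]
  rw [hcoeff, ← hE]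
  have hchoose : (((p * n + i + (m - n)).choose (m - n)) : ℚ) * ((p * n + i).factorial : ℚ)
      * ((m - n).factorial : ℚ) = ((p * n + i + (m - n)).factorial : ℚ) := by
    exact_mod_cast congrArg (Nat.cast (R := ℚ))
      (Nat.add_choose_mul_factorial_mul_factorial (p * n + i) (m - n))
  have h1 : (n.factorial : ℚ) ≠ 0 := by positivity
  have h2 : ((m - n).factorial : ℚ) ≠ 0 := by positivity
  have h3 : ((((p - 1) * n + j).factorial : ℚ)) ≠ 0 := by positivity
  field_simp
  linear_combination hchoose

lemma Aco_eq_zero (p i j : ℕ) (hp : 2 ≤ p) (hij : i < j) (m : ℕ) (hm : j ≤ m + i) :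
    Aco p i j m = 0 := by
  have hp1 : (1 : ℕ) ≤ p := by omega
  set d := m + i - j with hd
  set P : Polynomial ℚ :=
    ∏ t ∈ Finset.range d, (Polynomial.C ((p : ℚ) - 1) * Polynomial.X
      + Polynomial.C ((j : ℚ) + 1 + t)) with hP
  have heval : ∀ n : ℕ, P.eval (n : ℚ)
      = ((((p - 1) * n + i + m).factorial : ℚ)) / ((((p - 1) * n + j).factorial : ℚ)) := by
    intro n
    have hprod := prod_factorial_ratio ((p - 1) * n + j) d
    have hBd : (p - 1) * n + j + d = (p - 1) * n + i + m := by omega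
    rw [hBd] at hprod
    have hev : P.eval (n : ℚ) = ∏ t ∈ Finset.range d, ((((p - 1) * n + j : ℕ) : ℚ) + 1 + t) := by
      rw [hP, Polynomial.eval_prod]
      refine Finset.prod_congr rfl fun t _ => ?_
      simp only [Polynomial.eval_add, Polynomial.eval_mul, Polynomial.eval_C, Polynomial.eval_X]
      push_cast [Nat.cast_sub hp1]
      ring
    rw [hev, eq_div_iff (by positivity), mul_comm]
    exact hprod
  have hm1 : 1 ≤ m := by omega
  have hdm : d < m := by omega
  have hPdeg : P.degree < (m : WithBot ℕ) := by
    have hnd : P.natDegree ≤ d := by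
      rw [hP]
      refine le_trans (Polynomial.natDegree_prod_le _ _) ?_
      refine le_trans (Finset.sum_le_sum
        (g := fun _ => 1) (fun t _ => Polynomial.natDegree_linear_le)) ?_
      simp
    refine lt_of_le_of_lt (Polynomial.degree_le_natDegree) ?_
    exact_mod_cast lt_of_le_of_lt hnd hdm
  have hsum := alt_poly m P hPdeg
  have key : Aco p i j m * ((-1 : ℚ) ^ m * m.factorial)
      = ∑ n ∈ Finset.range (m + 1), (-1 : ℚ) ^ n * (m.choose n) * P.eval (n : ℚ) := by
    rw [Aco, Finset.sum_mul]
    refine Finset.sum_congr rfl fun n hn => ?_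
    have hn' : n ≤ m := by simp only [Finset.mem_range] at hn; omega
    have hsign : (-1 : ℚ) ^ (m - n) * (-1 : ℚ) ^ m = (-1 : ℚ) ^ n := by
      rw [← pow_add]
      have : m - n + m = n + 2 * (m - n) := by omega
      rw [this, pow_add, pow_mul]
      norm_num
    have hfact : ((m.choose n : ℚ)) * (n.factorial : ℚ) * ((m - n).factorial : ℚ)
        = (m.factorial : ℚ) := by
      exact_mod_cast congrArg (Nat.cast (R := ℚ)) (Nat.choose_mul_factorial_mul_factorial hn')
    rw [heval n]
    have h1 : (n.factorial : ℚ) ≠ 0 := by positivity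
    have h2 : ((m - n).factorial : ℚ) ≠ 0 := by positivity
    have h3 : ((((p - 1) * n + j).factorial : ℚ)) ≠ 0 := by positivity
    field_simp
    linear_combination (m.factorial : ℚ) * hsign - (-1 : ℚ) ^ n * hfact
  rw [hsum] at key
  have hne : ((-1 : ℚ) ^ m * m.factorial) ≠ 0 := by
    apply mul_ne_zero
    · exact pow_ne_zero _ (by norm_num)
    · positivity
  exact (mul_eq_zero.mp key).resolve_right hne

lemma Aco_ne_zero (p i j : ℕ) (hp : 2 ≤ p) (hij : i < j) :
    Aco p i j (j - i - 1) ≠ 0 := by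
  have hp1 : (1 : ℕ) ≤ p := by omega
  set m := j - i - 1 with hm
  have hji : j = m + i + 1 := by omega
  have ha : (0 : ℚ) < ((p - 1 : ℕ) : ℚ) := by
    have : 1 ≤ p - 1 := by omega
    exact_mod_cast Nat.lt_of_lt_of_le Nat.zero_lt_one this
  have hb : (0 : ℚ) < (j : ℚ) := by
    exact_mod_cast Nat.lt_of_le_of_lt (Nat.zero_le i) hij
  have key : Aco p i j m * ((-1 : ℚ) ^ m * m.factorial)
      = ∑ n ∈ Finset.range (m + 1),
          (-1 : ℚ) ^ n * (m.choose n) / (((p - 1 : ℕ) : ℚ) * n + (j : ℚ)) := by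
    rw [Aco, Finset.sum_mul]
    refine Finset.sum_congr rfl fun n hn => ?_
    have hn' : n ≤ m := by simp only [Finset.mem_range] at hn; omega
    have hsign : (-1 : ℚ) ^ (m - n) * (-1 : ℚ) ^ m = (-1 : ℚ) ^ n := by
      rw [← pow_add]
      have : m - n + m = n + 2 * (m - n) := by omega
      rw [this, pow_add, pow_mul]
      norm_num
    have hfact : ((m.choose n : ℚ)) * (n.factorial : ℚ) * ((m - n).factorial : ℚ)
        = (m.factorial : ℚ) := by
      exact_mod_cast congrArg (Nat.cast (R := ℚ)) (Nat.choose_mul_factorial_mul_factorial hn')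
    have hBE : (p - 1) * n + j = ((p - 1) * n + i + m) + 1 := by omega
    have hBfac : ((((p - 1) * n + j).factorial : ℚ))
        = ((((p - 1) * n + j : ℕ) : ℚ)) * (((p - 1) * n + i + m).factorial : ℚ) := by
      rw [hBE, Nat.factorial_succ]
      push_cast
      ring
    have hcast : (((p - 1) * n + j : ℕ) : ℚ) = ((p - 1 : ℕ) : ℚ) * n + (j : ℚ) := by
      push_cast
      ring
    have h1 : (n.factorial : ℚ) ≠ 0 := by positivity
    have h2 : ((m - n).factorial : ℚ) ≠ 0 := by positivity
    have h4 : (((p - 1) * n + i + m).factorial : ℚ) ≠ 0 := by positivity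
    have h5 : (0 : ℚ) < ((p - 1 : ℕ) : ℚ) * n + (j : ℚ) := by positivity
    rw [hBfac, hcast]
    set s : ℚ := ((p - 1 : ℕ) : ℚ) * n + (j : ℚ) with hs
    have h6 : s ≠ 0 := ne_of_gt h5
    field_simp
    linear_combination (m.factorial : ℚ) * hsign - (-1 : ℚ) ^ n * hfact
  rw [alt_inv _ ha m _ hb] at key
  have hprodpos : (0 : ℚ) < ∏ t ∈ Finset.range (m + 1), (((p - 1 : ℕ) : ℚ) * t + (j : ℚ)) :=
    Finset.prod_pos fun t _ => by positivity
  have hRpos : (0 : ℚ) < (m.factorial : ℚ) * ((p - 1 : ℕ) : ℚ) ^ m /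
      ∏ t ∈ Finset.range (m + 1), (((p - 1 : ℕ) : ℚ) * t + (j : ℚ)) := by positivity
  intro h
  rw [h, zero_mul] at key
  rw [← key] at hRpos
  exact lt_irrefl 0 hRpos

end FussCatalanAux

/-- For `p ≥ 2` and nonnegative integers `i < j`, the power series
`∑_{n≥0} ((pn+i)!/(n!·((p−1)n+j)!))·xⁿ·(1+x)^{−(pn+i+1)}` over `ℚ` is a polynomial in
`x` of degree exactly `j − i − 1`.  (The `n`-th term has order `n`, so the coefficient
of `x^m` in the sum only receives contributions from `n ≤ m`; the sum is rendered
accordingly.) -/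
theorem fuss_catalan_inverse_polynomial (p : ℕ) (hp : 2 ≤ p) (i j : ℕ) (hij : i < j) :
    ∃ q : Polynomial ℚ, q.degree = (j - i - 1 : ℕ) ∧
      (PowerSeries.mk fun m =>
          ∑ n ∈ Finset.range (m + 1),
            (((p * n + i).factorial : ℚ) /
                ((n.factorial : ℚ) * (((p - 1) * n + j).factorial : ℚ))) *
              coeff (R := ℚ) m (X ^ n * ((1 + X : PowerSeries ℚ) ^ (p * n + i + 1))⁻¹)) =
        (q : PowerSeries ℚ) := by
  have hA0 : ∀ m, j - i ≤ m → Aco p i j m = 0 := fun m hm =>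
    Aco_eq_zero p i j hp hij m (by omega)
  set q : Polynomial ℚ := ∑ m ∈ Finset.range (j - i), Polynomial.monomial m (Aco p i j m)
    with hq
  have hqcoeff : ∀ k, q.coeff k = if k < j - i then Aco p i j k else 0 := by
    intro k
    rw [hq, Polynomial.finset_sum_coeff]
    simp only [Polynomial.coeff_monomial]
    rw [Finset.sum_ite_eq' (Finset.range (j - i)) k]
    simp [Finset.mem_range]
  refine ⟨q, ?_, ?_⟩
  · have hne : q.coeff (j - i - 1) ≠ 0 := by
      rw [hqcoeff, if_pos (by omega)]
      exact Aco_ne_zero p i j hp hij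
    have hle : q.degree ≤ ((j - i - 1 : ℕ) : WithBot ℕ) := by
      rw [hq]
      refine le_trans (Polynomial.degree_sum_le _ _) ?_
      refine Finset.sup_le fun m hm => ?_
      refine le_trans (Polynomial.degree_monomial_le _ _) ?_
      simp only [Finset.mem_range] at hm
      exact_mod_cast (by omega : m ≤ j - i - 1)
    exact Polynomial.degree_eq_of_le_of_coeff_ne_zero hle hne
  · ext k
    rw [Polynomial.coeff_coe, coeff_mk, sum_eq_Aco p i j hp k, hqcoeff]
    by_cases hk : k < j - i
    · rw [if_pos hk]
    · rw [if_neg hk, hA0 k (by omega)]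
end

section
/- Let p ≥ 2 be an integer and let i and j be nonnegative integers with i ≥ j. Then (1−(p−1)x)^{2(i−j)+1} · Σ_{n≥0} ((pn+i)! / (n!·((p−1)n+j)!)) · x^n · (1+x)^{−(pn+i+1)}, as a formal power series over ℚ, is a polynomial in x of degree at most i−j. -/
open PowerSeries Finset

namespace FussAux



noncomputable def w (e k : ℕ) : ℚ := (-1)^k * ((e + k - 1).choose k : ℚ)

noncomputable def U (p m r s : ℕ) : ℚ :=
  ∑ n ∈ range (m+1),
    (-1)^(m+n) * ((p*n+r).choose n : ℚ) * ((p*n+s+(m-n)).choose (m-n) : ℚ)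

noncomputable def V (p m t : ℕ) : ℚ :=
  ∑ k ∈ range (m+1), (-1)^k * ((t+k-1).choose k : ℚ) * ((p:ℚ)-1)^(m-k)

lemma V_zero (p m : ℕ) : V p m 0 = ((p:ℚ)-1)^m := by
  rw [V, Finset.sum_eq_single 0]
  · simp
  · intro k _ hk
    obtain ⟨k, rfl⟩ := Nat.exists_eq_succ_of_ne_zero hk
    have : (0 + (k+1) - 1).choose (k+1) = 0 := Nat.choose_eq_zero_of_lt (by omega)
    simp [this]
  · simp

lemma V_succ (p m t : ℕ) : V p (m+1) (t+1) = V p (m+1) t - V p m (t+1) := by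
  have h : V p (m+1) (t+1) - V p (m+1) t = - V p m (t+1) := by
    rw [V, V, ← Finset.sum_sub_distrib, Finset.sum_range_succ', V, ← Finset.sum_neg_distrib]
    have h0 : ((-1:ℚ))^0 * ((t+1+0-1).choose 0 : ℚ) * ((p:ℚ)-1)^(m+1-0)
        - ((-1:ℚ))^0 * ((t+0-1).choose 0 : ℚ) * ((p:ℚ)-1)^(m+1-0) = 0 := by simp
    rw [h0, add_zero]
    refine Finset.sum_congr rfl fun k hk => ?_
    have e1 : t+1+(k+1)-1 = (t+k)+1 := by omega
    have e2 : t+(k+1)-1 = t+k := by omega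
    have e3 : m+1-(k+1) = m-k := by omega
    have e4 : t+1+k-1 = t+k := by omega
    rw [e1, e2, e3, e4, Nat.choose_succ_succ' (t+k) k]
    push_cast
    ring
  linarith [h]


lemma V_one_succ (p m : ℕ) : V p (m+1) 1 = ((p:ℚ)-1) * V p m 1 + (-1)^(m+1) := by
  rw [V, V, Finset.sum_range_succ, Finset.mul_sum]
  have h1 : ((-1:ℚ))^(m+1) * ((1+(m+1)-1).choose (m+1) : ℚ) * ((p:ℚ)-1)^(m+1-(m+1))
      = (-1)^(m+1) := by
    have : 1+(m+1)-1 = m+1 := by omega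
    simp [this]
  rw [h1]
  congr 1
  refine Finset.sum_congr rfl fun k hk => ?_
  have hk' : k ≤ m := by simpa [Nat.lt_succ_iff] using hk
  have e1 : 1+k-1 = k := by omega
  have e2 : m+1-k = (m-k)+1 := by omega
  rw [e1, e2]
  simp [pow_succ]
  ring

lemma V_one (p m : ℕ) : (-1:ℚ)^(m+1) + (p:ℚ) * V p m 1 = ((p:ℚ)-1)^(m+1) := by
  induction m with
  | zero => simp [V]; ring
  | succ m ih =>
    rw [V_one_succ]
    have : (p:ℚ) * (((p:ℚ)-1) * V p m 1 + (-1)^(m+1))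
        = ((p:ℚ)-1) * ((p:ℚ) * V p m 1) + (p:ℚ) * (-1)^(m+1) := by ring
    rw [this]
    have h2 : (p:ℚ) * V p m 1 = ((p:ℚ)-1)^(m+1) - (-1)^(m+1) := by linarith [ih]
    rw [h2]
    ring


lemma P1 (p m r s : ℕ) : U p (m+1) r (s+1) = U p (m+1) r s - U p m r (s+1) := by
  rw [U, U, U, Finset.sum_range_succ, Finset.sum_range_succ (n := m+1)]
  have hlast : ((-1:ℚ))^(m+1+(m+1)) * ((p*(m+1)+r).choose (m+1) : ℚ)
      * ((p*(m+1)+(s+1)+(m+1-(m+1))).choose (m+1-(m+1)) : ℚ)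
      = ((-1:ℚ))^(m+1+(m+1)) * ((p*(m+1)+r).choose (m+1) : ℚ)
      * ((p*(m+1)+s+(m+1-(m+1))).choose (m+1-(m+1)) : ℚ) := by
    simp
  rw [hlast]
  have hmain : ∀ n ∈ range (m+1),
      ((-1:ℚ))^(m+1+n) * ((p*n+r).choose n : ℚ)
        * ((p*n+(s+1)+(m+1-n)).choose (m+1-n) : ℚ)
      = ((-1:ℚ))^(m+1+n) * ((p*n+r).choose n : ℚ)
          * ((p*n+s+(m+1-n)).choose (m+1-n) : ℚ)
        - ((-1:ℚ))^(m+n) * ((p*n+r).choose n : ℚ)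
          * ((p*n+(s+1)+(m-n)).choose (m-n) : ℚ) := by
    intro n hn
    have hn' : n ≤ m := by simpa [Nat.lt_succ_iff] using hn
    set A := p*n+s+(m-n) with hA
    have e1 : p*n+(s+1)+(m+1-n) = A+2 := by omega
    have e2 : m+1-n = (m-n)+1 := by omega
    have e3 : p*n+s+(m+1-n) = A+1 := by omega
    have e4 : p*n+(s+1)+(m-n) = A+1 := by omega
    rw [e1, e3, e4, e2, show A+2 = (A+1)+1 from rfl, Nat.choose_succ_succ' (A+1) (m-n)]
    have e5 : (m+1+n) = (m+n)+1 := by omega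
    rw [e5]
    push_cast
    ring
  rw [Finset.sum_congr rfl hmain, Finset.sum_sub_distrib]
  ring

lemma P2 (p m r s : ℕ) : U p (m+1) (r+1) s = U p (m+1) r s + U p m (r+p) (s+p) := by
  rw [U, U, U, Finset.sum_range_succ', Finset.sum_range_succ' (n := m+1)]
  have h0 : ((-1:ℚ))^(m+1+0) * ((p*0+(r+1)).choose 0 : ℚ)
        * ((p*0+s+(m+1-0)).choose (m+1-0) : ℚ)
      = ((-1:ℚ))^(m+1+0) * ((p*0+r).choose 0 : ℚ)
        * ((p*0+s+(m+1-0)).choose (m+1-0) : ℚ) := by simp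
  rw [h0]
  have hmain : ∀ n ∈ range (m+1),
      ((-1:ℚ))^(m+1+(n+1)) * ((p*(n+1)+(r+1)).choose (n+1) : ℚ)
        * ((p*(n+1)+s+(m+1-(n+1))).choose (m+1-(n+1)) : ℚ)
      = ((-1:ℚ))^(m+1+(n+1)) * ((p*(n+1)+r).choose (n+1) : ℚ)
          * ((p*(n+1)+s+(m+1-(n+1))).choose (m+1-(n+1)) : ℚ)
        + ((-1:ℚ))^(m+n) * ((p*n+(r+p)).choose n : ℚ)
          * ((p*n+(s+p)+(m-n)).choose (m-n) : ℚ) := by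
    intro n hn
    have e1 : p*(n+1)+(r+1) = (p*n+r+p)+1 := by ring
    have e2 : m+1-(n+1) = m-n := by omega
    have e3 : p*(n+1)+s+(m-n) = p*n+(s+p)+(m-n) := by ring
    have e4 : p*n+(r+p) = p*n+r+p := by ring
    have e5 : (m+1+(n+1)) = (m+n)+2 := by omega
    rw [e1, e2, e3, e4, e5, Nat.choose_succ_succ' (p*n+r+p) n]
    push_cast
    ring
  rw [Finset.sum_congr rfl hmain, Finset.sum_add_distrib]
  ring


lemma choose_p_mul (p n : ℕ) (hp : 1 ≤ p) :
    ((p*(n+1)).choose (n+1) : ℚ) = (p:ℚ) * ((p*n+(p-1)).choose n : ℚ) := by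
  have h1 : p*(n+1) = (p*n+(p-1)) + 1 := by
    have : p*(n+1) = p*n+p := by ring
    omega
  have hnat : (p*n+(p-1)+1) * Nat.choose (p*n+(p-1)) n
      = Nat.choose (p*n+(p-1)+1) (n+1) * (n+1) := by
    simpa using Nat.add_one_mul_choose_eq (p*n+(p-1)) n
  have hcast : ((p*(n+1) : ℕ) : ℚ) * ((p*n+(p-1)).choose n : ℚ)
      = ((p*(n+1)).choose (n+1) : ℚ) * ((n:ℚ)+1) := by
    rw [h1]; exact_mod_cast congrArg (Nat.cast : ℕ → ℚ) hnat
  have hne : ((n:ℚ)+1) ≠ 0 := by positivity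
  field_simp at hcast ⊢
  push_cast at hcast
  exact mul_right_cancel₀ hne (by linear_combination -hcast)

lemma P3 (p m : ℕ) (hp : 1 ≤ p) :
    U p (m+1) 0 0 = (-1:ℚ)^(m+1) + (p:ℚ) * U p m (p-1) p := by
  rw [U, U, Finset.sum_range_succ', Finset.mul_sum]
  have h0 : ((-1:ℚ))^(m+1+0) * ((p*0+0).choose 0 : ℚ)
      * ((p*0+0+(m+1-0)).choose (m+1-0) : ℚ) = (-1:ℚ)^(m+1) := by simp
  rw [h0, add_comm]
  congr 1
  refine Finset.sum_congr rfl fun n hn => ?_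
  have e1 : m+1-(n+1) = m-n := by omega
  have e2 : p*(n+1)+0+(m-n) = p*n+p+(m-n) := by ring
  have e3 : m+1+(n+1) = (m+n)+2 := by omega
  have e4 : p*(n+1)+0 = p*(n+1) := by ring
  rw [e1, e2, e3, e4, choose_p_mul p n hp]
  push_cast
  ring

lemma key (p : ℕ) (hp : 1 ≤ p) : ∀ m r t, U p m r (r+t) = V p m t := by
  intro m
  induction m with
  | zero =>
    intro r t
    simp [U, V]
  | succ m ih =>
    have hdiag : ∀ r, U p (m+1) r r = V p (m+1) 0 := by
      intro r
      induction r with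
      | zero =>
        rw [P3 p m hp, V_zero]
        have h1 : U p m (p-1) p = V p m 1 := by
          have h := ih (p-1) 1
          rwa [show (p-1)+1 = p by omega] at h
        rw [h1, V_one]
      | succ r ihr =>
        have h2 : U p (m+1) (r+1) (r+1) = U p (m+1) r (r+1) + U p m (r+p) ((r+1)+p) := by
          exact P2 p m r (r+1)
        have h3 : U p m (r+p) ((r+1)+p) = V p m 1 := by
          have : (r+1)+p = (r+p)+1 := by omega
          rw [this]
          exact ih (r+p) 1
        have h4 : U p (m+1) r (r+1) = U p (m+1) r r - U p m r (r+1) := P1 p m r r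
        have h5 : U p m r (r+1) = V p m 1 := ih r 1
        rw [h2, h3, h4, h5, ihr]
        ring
    intro r t
    induction t with
    | zero => exact hdiag r
    | succ t iht =>
      have h6 : U p (m+1) r (r+(t+1)) = U p (m+1) r (r+t) - U p m r (r+(t+1)) := by
        have : r+(t+1) = (r+t)+1 := by omega
        rw [this]
        exact P1 p m r (r+t)
      rw [h6, iht, ih r (t+1), V_succ]


lemma mk_w_zero : (mk (w 0) : PowerSeries ℚ) = 1 := by
  ext k
  cases k with
  | zero => simp [w]
  | succ k =>
    have : (0+(k+1)-1).choose (k+1) = 0 := Nat.choose_eq_zero_of_lt (by omega)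
    simp [w, this]

lemma one_add_X_mul_w (e : ℕ) :
    ((1 + X : PowerSeries ℚ)) * mk (w (e+1)) = mk (w e) := by
  ext k
  rw [add_mul, one_mul, map_add]
  cases k with
  | zero => simp [w, coeff_zero_eq_constantCoeff]
  | succ k =>
    rw [coeff_succ_X_mul, coeff_mk, coeff_mk, coeff_mk, w, w, w]
    have e1 : e+1+(k+1)-1 = (e+k)+1 := by omega
    have e2 : e+1+k-1 = e+k := by omega
    have e3 : e+(k+1)-1 = e+k := by omega
    rw [e1, e2, e3, Nat.choose_succ_succ' (e+k) k]
    push_cast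
    ring

lemma pow_mul_w (e : ℕ) : ((1 + X : PowerSeries ℚ))^e * mk (w e) = 1 := by
  induction e with
  | zero => simpa using mk_w_zero
  | succ e ih =>
    have : ((1+X:PowerSeries ℚ))^(e+1) * PowerSeries.mk (w (e+1))
        = (1+X:PowerSeries ℚ)^e * ((1+X:PowerSeries ℚ) * PowerSeries.mk (w (e+1))) := by ring
    rw [this, one_add_X_mul_w, ih]

lemma inv_pow_eq (e : ℕ) : (((1 + X : PowerSeries ℚ))^e)⁻¹ = mk (w e) := by
  have hc : constantCoeff ((1+X:PowerSeries ℚ)^e) ≠ 0 := by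
    rw [map_pow]
    simp
  rw [PowerSeries.inv_eq_iff_mul_eq_one hc]
  rw [mul_comm]
  exact pow_mul_w e

lemma coeff_term (e n m : ℕ) (h : n ≤ m) :
    coeff m (X^n * (((1 + X : PowerSeries ℚ))^e)⁻¹) = w e (m-n) := by
  rw [inv_pow_eq, coeff_X_pow_mul', if_pos h, coeff_mk]

/-- the θ = x d/dx operator -/
noncomputable def th (f : PowerSeries ℚ) : PowerSeries ℚ := mk fun m => (m:ℚ) * coeff m f

lemma th_mul (f g : PowerSeries ℚ) : th (f * g) = th f * g + f * th g := by
  ext m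
  rw [th, coeff_mk, map_add, coeff_mul, coeff_mul, coeff_mul, Finset.mul_sum,
    ← Finset.sum_add_distrib]
  refine Finset.sum_congr rfl fun x hx => ?_
  have hm : x.1 + x.2 = m := Finset.HasAntidiagonal.mem_antidiagonal.mp hx
  rw [th, th, coeff_mk, coeff_mk, ← hm]
  push_cast
  ring

lemma th_pow (f : PowerSeries ℚ) (n : ℕ) :
    th (f^(n+1)) = C ((n:ℚ)+1) * (f^n * th f) := by
  induction n with
  | zero => simp [th_mul]
  | succ n ih =>
    rw [pow_succ, th_mul, ih]
    have hC : (C (((n+1:ℕ):ℚ)+1)) = C ((n:ℚ)+1) + 1 := by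
      push_cast
      rw [map_add, map_one]
    rw [hC]
    ring

lemma th_coe (q : Polynomial ℚ) :
    th (q : PowerSeries ℚ)
      = ((Polynomial.X * Polynomial.derivative q : Polynomial ℚ) : PowerSeries ℚ) := by
  ext m
  rw [th, coeff_mk, Polynomial.coeff_coe, Polynomial.coeff_coe]
  cases m with
  | zero => simp
  | succ m =>
    rw [Polynomial.coeff_X_mul, Polynomial.coeff_derivative]
    push_cast
    ring

lemma th_one_sub (c : ℚ) : th (1 - C c * X) = -(C c * X) := by
  ext m
  rw [th, coeff_mk]
  cases m with
  | zero => simp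
  | succ m =>
    rw [map_sub, map_neg]
    rcases eq_or_ne m 0 with rfl | hm
    · simp
    · have h1 : coeff (m+1) (C c * X) = 0 := by
        rw [coeff_C_mul, coeff_X, if_neg (by omega), mul_zero]
      simp [h1, coeff_one, Nat.succ_ne_zero]


noncomputable def a (p i j : ℕ) : ℕ → ℚ := fun m =>
  ∑ n ∈ range (m+1),
    ((p*n+i).factorial : ℚ) / ((n.factorial : ℚ) * (((p-1)*n+j).factorial : ℚ))
      * w (p*n+i+1) (m-n)

lemma neg_one_pow_sub (m n : ℕ) (h : n ≤ m) : ((-1:ℚ))^(m-n) = (-1)^(m+n) := by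
  have e : m+n = (m-n)+2*n := by omega
  rw [e, pow_add, pow_mul, neg_one_sq, one_pow, mul_one]

lemma base (p j : ℕ) (hp : 1 ≤ p) (m : ℕ) : a p j j m = ((p:ℚ)-1)^m := by
  have h1 : a p j j m = U p m j j := by
    rw [a, U]
    refine Finset.sum_congr rfl fun n hn => ?_
    have hn' : n ≤ m := by simpa [Nat.lt_succ_iff] using hn
    have hnp : n ≤ p*n+j := by
      have : n ≤ p*n := Nat.le_mul_of_pos_left n (by omega)
      omega
    have hsub : p*n+j-n = (p-1)*n+j := by
      have hpn : (p-1)*n + n = p*n := by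
        have h : (p-1)+1 = p := by omega
        calc (p-1)*n + n = ((p-1)+1)*n := by ring
        _ = p*n := by rw [h]
      omega
    have hch : ((p*n+j).choose n : ℚ)
        = ((p*n+j).factorial : ℚ) / ((n.factorial : ℚ) * (((p-1)*n+j).factorial : ℚ)) := by
      rw [Nat.cast_choose ℚ hnp, hsub]
    have hw : w (p*n+j+1) (m-n) = (-1:ℚ)^(m+n) * ((p*n+j+(m-n)).choose (m-n) : ℚ) := by
      rw [w]
      have e1 : p*n+j+1+(m-n)-1 = p*n+j+(m-n) := by omega
      rw [e1, neg_one_pow_sub m n hn']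
    rw [hch, hw]
    ring
  have h2 := key p hp m j 0
  simp only [Nat.add_zero] at h2
  rw [h1, h2, V_zero]

lemma fact_succ_cast (N : ℕ) : ((N+1).factorial : ℚ) = ((N:ℚ)+1) * (N.factorial : ℚ) := by
  rw [Nat.factorial_succ]; push_cast; ring

lemma core (p e k : ℕ) :
    (e:ℚ) * w (e+1) (k+1)
      = ((p:ℚ)-1) * ((e:ℚ) * w (e+1) k) + ((e:ℚ) + (p:ℚ)*((k:ℚ)+1)) * w e (k+1) := by
  have e1 : e+1+(k+1)-1 = (e+k)+1 := by omega
  have e2 : e+1+k-1 = e+k := by omega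
  have e3 : e+(k+1)-1 = e+k := by omega
  rw [w, w, w, e1, e2, e3, Nat.choose_succ_succ' (e+k) k]
  have hB : (((e+k).choose (k+1) : ℕ) : ℚ) * ((k:ℚ)+1)
      = (((e+k).choose k : ℕ) : ℚ) * (e:ℚ) := by
    have h := Nat.choose_succ_right_eq (e+k) k
    have h2 : e+k-k = e := by omega
    rw [h2] at h
    exact_mod_cast congrArg (Nat.cast : ℕ → ℚ) h
  push_cast
  rw [pow_succ]
  linear_combination ((-1:ℚ))^k * (p:ℚ) * hB

lemma step0 (p i j : ℕ) : a p (i+1) j 0 = ((i:ℚ)+1) * a p i j 0 := by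
  rw [a, a]
  simp only [show (0:ℕ)+1 = 1 from rfl, Finset.sum_range_one]
  have e1 : p*0+(i+1) = (p*0+i)+1 := by ring
  rw [e1, fact_succ_cast]
  have e2 : p*0+(i+1)+1 = (p*0+i+1)+1 := by omega
  have : ∀ E : ℕ, w E (0-0) = 1 := by intro E; rw [w]; simp
  rw [e2] at *
  rw [this, this]
  push_cast
  ring

lemma stepS (p i j m : ℕ) :
    a p (i+1) j (m+1)
      = ((p:ℚ)-1) * a p (i+1) j m + ((p*(m+1)+i+1 : ℕ):ℚ) * a p i j (m+1) := by
  rw [a, a, a, Finset.sum_range_succ, Finset.sum_range_succ (n := m+1)]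
  have hlast :
      ((p*(m+1)+(i+1)).factorial : ℚ)
          / ((((m+1)).factorial : ℚ) * (((p-1)*(m+1)+j).factorial : ℚ))
        * w (p*(m+1)+(i+1)+1) (m+1-(m+1))
      = ((p*(m+1)+i+1 : ℕ):ℚ) *
        (((p*(m+1)+i).factorial : ℚ)
          / ((((m+1)).factorial : ℚ) * (((p-1)*(m+1)+j).factorial : ℚ))
        * w (p*(m+1)+i+1) (m+1-(m+1))) := by
    have e1 : p*(m+1)+(i+1) = (p*(m+1)+i)+1 := by omega
    rw [e1, fact_succ_cast]
    have e2 : m+1-(m+1) = 0 := by omega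
    have hw : ∀ E : ℕ, w E 0 = 1 := by intro E; rw [w]; simp
    rw [e2, hw, hw]
    push_cast
    ring
  have hmain : ∀ n ∈ range (m+1),
      ((p*n+(i+1)).factorial : ℚ)
          / ((n.factorial : ℚ) * (((p-1)*n+j).factorial : ℚ))
        * w (p*n+(i+1)+1) (m+1-n)
      = ((p:ℚ)-1) * (((p*n+(i+1)).factorial : ℚ)
          / ((n.factorial : ℚ) * (((p-1)*n+j).factorial : ℚ))
        * w (p*n+(i+1)+1) (m-n))
        + ((p*(m+1)+i+1 : ℕ):ℚ) * (((p*n+i).factorial : ℚ)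
          / ((n.factorial : ℚ) * (((p-1)*n+j).factorial : ℚ))
        * w (p*n+i+1) (m+1-n)) := by
    intro n hn
    have hn' : n ≤ m := by simpa [Nat.lt_succ_iff] using hn
    set k := m - n with hk
    have e0 : m+1-n = k+1 := by omega
    have e1 : p*n+(i+1) = (p*n+i)+1 := by omega
    have e2 : p*n+(i+1)+1 = (p*n+i+1)+1 := by omega
    have e3 : p*(m+1)+i+1 = (p*n+i+1) + p*(k+1) := by
      have h4 : k+1+n = m+1 := by omega
      have h5 : p*(k+1) + p*n = p*(m+1) := by rw [← Nat.mul_add, h4]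
      omega
    rw [e0, e1, e3, fact_succ_cast]
    have hcore := core p (p*n+i+1) k
    push_cast
    push_cast at hcore
    set r := ((p*n+i).factorial : ℚ)
          / ((n.factorial : ℚ) * (((p-1)*n+j).factorial : ℚ)) with hr
    have hrw : ((p*n+i).factorial : ℚ)
          / ((n.factorial : ℚ) * (((p-1)*n+j).factorial : ℚ)) = r := rfl
    linear_combination r * hcore
  rw [Finset.sum_congr rfl hmain, Finset.sum_add_distrib, ← Finset.mul_sum, ← Finset.mul_sum,
    hlast]
  ring


lemma coeff_one_sub_mul_zero (c : ℚ) (f : PowerSeries ℚ) :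
    coeff 0 ((1 - C c * X) * f) = coeff 0 f := by
  have h : (1 - C c * X) * f = f - C c * (X * f) := by ring
  rw [h, map_sub, coeff_C_mul]
  have : coeff 0 (X * f) = 0 := by
    rw [coeff_zero_eq_constantCoeff, map_mul]
    simp
  rw [this, mul_zero, sub_zero]

lemma coeff_one_sub_mul_succ (c : ℚ) (f : PowerSeries ℚ) (m : ℕ) :
    coeff (m+1) ((1 - C c * X) * f) = coeff (m+1) f - c * coeff m f := by
  have h : (1 - C c * X) * f = f - C c * (X * f) := by ring
  rw [h, map_sub, coeff_C_mul, coeff_succ_X_mul]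

lemma FACT1 (p j : ℕ) (hp : 1 ≤ p) :
    (1 - C ((p:ℚ)-1) * X) * PowerSeries.mk (a p j j) = 1 := by
  ext m
  cases m with
  | zero =>
    rw [coeff_one_sub_mul_zero, coeff_mk, base p j hp, coeff_zero_eq_constantCoeff, map_one]
    simp
  | succ m =>
    rw [coeff_one_sub_mul_succ, coeff_mk, coeff_mk, base p j hp, base p j hp]
    have : coeff (m+1) (1 : PowerSeries ℚ) = 0 := by
      rw [coeff_one]; simp
    rw [this, pow_succ]
    ring

lemma FACT2 (p i j : ℕ) :
    (1 - C ((p:ℚ)-1) * X) * PowerSeries.mk (a p (i+1) j)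
      = C (p:ℚ) * th (PowerSeries.mk (a p i j)) + C ((i:ℚ)+1) * PowerSeries.mk (a p i j) := by
  ext m
  rw [map_add, coeff_C_mul, coeff_C_mul, th, coeff_mk, coeff_mk]
  cases m with
  | zero =>
    rw [coeff_one_sub_mul_zero, coeff_mk, step0]
    push_cast
    ring
  | succ m =>
    rw [coeff_one_sub_mul_succ, coeff_mk, coeff_mk, stepS]
    push_cast
    ring

lemma deg_X_mul_der (q : Polynomial ℚ) : (Polynomial.X * Polynomial.derivative q).degree ≤ q.degree := by
  rcases eq_or_ne (Polynomial.derivative q) 0 with h | h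
  · rw [h, mul_zero]
    simp
  · have hq : q ≠ 0 := by
      intro hq0
      exact h (by rw [hq0, Polynomial.derivative_zero])
    rw [Polynomial.degree_mul, Polynomial.degree_X]
    have hlt := Polynomial.degree_derivative_lt hq
    rw [add_comm]
    exact Nat.WithBot.add_one_le_of_lt hlt

lemma main (p j : ℕ) (hp : 1 ≤ p) (k : ℕ) :
    ∃ q : Polynomial ℚ, q.degree ≤ (k:ℕ) ∧
      (1 - C ((p:ℚ)-1) * X)^(2*k+1) * PowerSeries.mk (a p (j+k) j) = (q : PowerSeries ℚ) := by
  induction k with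
  | zero =>
    refine ⟨1, by simp, ?_⟩
    simpa using FACT1 p j hp
  | succ k ih =>
    obtain ⟨q, hdeg, hq⟩ := ih
    set c : ℚ := (p:ℚ)-1 with hc
    set qq : Polynomial ℚ :=
      Polynomial.C (p:ℚ) * ((1 - Polynomial.C c * Polynomial.X) * (Polynomial.X * Polynomial.derivative q)
          + Polynomial.C (2*(k:ℚ)+1) * Polynomial.C c * (Polynomial.X * q))
        + Polynomial.C ((j:ℚ)+(k:ℚ)+1) * ((1 - Polynomial.C c * Polynomial.X) * q) with hqq
    refine ⟨qq, ?_, ?_⟩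
    · -- degree bound
      have h1 : (1 - Polynomial.C c * Polynomial.X : Polynomial ℚ).degree ≤ 1 := by
        refine le_trans (Polynomial.degree_sub_le _ _) (max_le ?_ ?_)
        · rw [Polynomial.degree_one]
          decide
        · refine le_trans (Polynomial.degree_mul_le _ _) ?_
          refine le_trans (add_le_add Polynomial.degree_C_le (le_of_eq Polynomial.degree_X)) ?_
          norm_num
      have hXq : (Polynomial.X * q : Polynomial ℚ).degree ≤ (k:ℕ)+1 := by
        refine le_trans (Polynomial.degree_mul_le _ _) ?_
        rw [Polynomial.degree_X]
        rw [add_comm]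
        exact_mod_cast add_le_add hdeg (le_refl (1 : WithBot ℕ))
      have hXd : ((1 - Polynomial.C c * Polynomial.X) * (Polynomial.X * Polynomial.derivative q) : Polynomial ℚ).degree ≤ (k:ℕ)+1 := by
        refine le_trans (Polynomial.degree_mul_le _ _) ?_
        refine le_trans (add_le_add h1 (le_trans (deg_X_mul_der q) hdeg)) ?_
        rw [add_comm]
      have h2 : ((1 - Polynomial.C c * Polynomial.X) * q : Polynomial ℚ).degree ≤ (k:ℕ)+1 := by
        refine le_trans (Polynomial.degree_mul_le _ _) ?_
        refine le_trans (add_le_add h1 hdeg) ?_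
        rw [add_comm]
      rw [hqq]
      refine le_trans (Polynomial.degree_add_le _ _) ?_
      rw [max_le_iff]
      constructor
      · refine le_trans (Polynomial.degree_mul_le _ _) ?_
        have hsum : ((1 - Polynomial.C c * Polynomial.X) * (Polynomial.X * Polynomial.derivative q)
            + Polynomial.C (2*(k:ℚ)+1) * Polynomial.C c * (Polynomial.X * q) : Polynomial ℚ).degree ≤ (k:ℕ)+1 := by
          refine le_trans (Polynomial.degree_add_le _ _) (max_le hXd ?_)
          have hCC : (Polynomial.C (2*(k:ℚ)+1) * Polynomial.C c : Polynomial ℚ).degree ≤ 0 := by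
            rw [← Polynomial.C_mul]
            exact Polynomial.degree_C_le
          refine le_trans (Polynomial.degree_mul_le _ _) ?_
          refine le_trans (add_le_add hCC hXq) ?_
          simp
        refine le_trans (add_le_add Polynomial.degree_C_le hsum) ?_
        simp
      · refine le_trans (Polynomial.degree_mul_le _ _) ?_
        refine le_trans (add_le_add Polynomial.degree_C_le h2) ?_
        simp
    · -- the series identity
      have hF2 := FACT2 p (j+k) j
      have hth := congrArg th hq
      rw [th_mul, th_pow, th_one_sub, th_coe] at hth
      have hc1 : (((2*k : ℕ):ℚ)+1) = 2*(k:ℚ)+1 := by push_cast; ring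
      have hc2 : (((j+k:ℕ):ℚ)+1) = (j:ℚ)+(k:ℚ)+1 := by push_cast; ring
      rw [hc1] at hth
      rw [hc2, ← hc] at hF2
      rw [show j+(k+1) = (j+k)+1 from rfl, hqq]
      simp only [Polynomial.coe_add, Polynomial.coe_mul, Polynomial.coe_one,
        Polynomial.coe_C, Polynomial.coe_X, Polynomial.coe_sub] at hth ⊢
      linear_combination ((1 - C c * X)^(2*k+2)) * hF2
        + (C (p:ℚ)) * (1 - C c * X) * hth
        + (C (p:ℚ) * (C (2*(k:ℚ)+1) * C c) * X
            + C ((j:ℚ)+(k:ℚ)+1) * (1 - C c * X)) * hq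


end FussAux

open PowerSeries

/-- For `p ≥ 2` and nonnegative integers `i ≥ j`,
`(1−(p−1)x)^{2(i−j)+1} · ∑_{n≥0} ((pn+i)!/(n!·((p−1)n+j)!))·xⁿ·(1+x)^{−(pn+i+1)}`,
as a formal power series over `ℚ`, is a polynomial in `x` of degree at most `i − j`.
(The `n`-th term of the sum has order `n`, so the coefficient of `x^m` only receives
contributions from `n ≤ m`; the sum is rendered accordingly.) -/
theorem fuss_catalan_inverse_polynomial' (p : ℕ) (hp : 2 ≤ p) (i j : ℕ) (hij : j ≤ i) :
    ∃ q : Polynomial ℚ, q.degree ≤ (i - j : ℕ) ∧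
      (1 - PowerSeries.C (R := ℚ) ((p : ℚ) - 1) * X) ^ (2 * (i - j) + 1) *
        (PowerSeries.mk fun m =>
          ∑ n ∈ Finset.range (m + 1),
            (((p * n + i).factorial : ℚ) /
                ((n.factorial : ℚ) * (((p - 1) * n + j).factorial : ℚ))) *
              coeff (R := ℚ) m (X ^ n * ((1 + X : PowerSeries ℚ) ^ (p * n + i + 1))⁻¹)) =
        (q : PowerSeries ℚ) := by
  have hp1 : 1 ≤ p := by omega
  obtain ⟨q, hdeg, hq⟩ := FussAux.main p j hp1 (i-j)
  have hji : j + (i-j) = i := by omega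
  rw [hji] at hq
  refine ⟨q, hdeg, ?_⟩
  rw [← hq]
  congr 1
  apply congrArg
  funext m
  rw [FussAux.a]
  refine Finset.sum_congr rfl fun n hn => ?_
  have hn' : n ≤ m := by simpa [Nat.lt_succ_iff] using hn
  rw [FussAux.coeff_term (p*n+i+1) n m hn']
end

section
/- (Moon's theorem on trees with given degrees.) Let m ≥ 2 be an integer and let d_1, d_2, …, d_m be positive integers. The number of (unrooted, labeled) trees on the vertex set {1, 2, …, m} in which vertex i has degree d_i for every i is the multinomial coefficient (m−2)! / ((d_1−1)!·(d_2−1)!⋯(d_m−1)!) if d_1 + d_2 + ⋯ + d_m = 2(m−1), and is 0 otherwise. -/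
open Finset SimpleGraph

namespace MoonAux

lemma multinomial_rec {α : Type*} [DecidableEq α] (s : Finset α) (a : α → ℕ)
    (h : 0 < ∑ j ∈ s, a j) :
    ∑ j ∈ s, (if 1 ≤ a j then Nat.multinomial s (Function.update a j (a j - 1)) else 0)
      = Nat.multinomial s a := by
  have hpos : 0 < ∏ v ∈ s, (a v).factorial :=
    Finset.prod_pos fun v _ => Nat.factorial_pos _
  apply Nat.eq_of_mul_eq_mul_left hpos
  rw [Nat.multinomial_spec, Finset.mul_sum]
  have key : ∀ j ∈ s,
      (∏ v ∈ s, (a v).factorial) *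
        (if 1 ≤ a j then Nat.multinomial s (Function.update a j (a j - 1)) else 0)
        = a j * (∑ v ∈ s, a v - 1).factorial := by
    intro j hj
    by_cases hja : 1 ≤ a j
    · rw [if_pos hja]
      have h1 : ∏ v ∈ s, (a v).factorial
          = a j * ∏ v ∈ s, ((Function.update a j (a j - 1)) v).factorial := by
        rw [← Finset.mul_prod_erase s (fun v => (a v).factorial) hj,
          ← Finset.mul_prod_erase s (fun v => ((Function.update a j (a j - 1)) v).factorial) hj]
        have e1 : ∀ v ∈ s.erase j,
            ((Function.update a j (a j - 1)) v).factorial = (a v).factorial := by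
          intro v hv
          rw [Function.update_of_ne (Finset.mem_erase.1 hv).1]
        rw [Finset.prod_congr rfl e1, Function.update_self, ← mul_assoc,
          Nat.mul_factorial_pred (Nat.one_le_iff_ne_zero.mp hja)]
      rw [h1, mul_assoc, Nat.multinomial_spec]
      congr 2
      -- ∑ update = ∑ - 1
      have h2 : ∑ v ∈ s, (Function.update a j (a j - 1)) v
          = (a j - 1) + ∑ v ∈ s.erase j, a v := by
        rw [← Finset.add_sum_erase s _ hj, Function.update_self]
        congr 1
        exact Finset.sum_congr rfl fun v hv => by
          rw [Function.update_of_ne (Finset.mem_erase.1 hv).1]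
      have h3 : ∑ v ∈ s, a v = a j + ∑ v ∈ s.erase j, a v :=
        (Finset.add_sum_erase s a hj).symm
      omega
    · rw [if_neg hja, mul_zero]
      have : a j = 0 := by omega
      rw [this, zero_mul]
  rw [Finset.sum_congr rfl key, ← Finset.sum_mul, Nat.mul_factorial_pred h.ne']


variable {V : Type*} {G : SimpleGraph V} {i j : V}

/-- In a graph where `i` has unique neighbour `j`, a path between vertices distinct
from `i` avoids `i`. -/
lemma not_mem_support_of_isPath (hiN : ∀ x, G.Adj i x → x = j) {w u : V}
    (p : G.Walk u w) : p.IsPath → u ≠ i → w ≠ i → i ∉ p.support := by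
  induction p with
  | nil =>
    intro _ hu _
    simp only [SimpleGraph.Walk.support_nil, List.mem_singleton]
    exact fun h => hu h.symm
  | @cons u x w h q ih =>
    intro hp hu hw
    rw [SimpleGraph.Walk.support_cons, List.mem_cons]
    push_neg
    refine ⟨fun hiu => hu hiu.symm, ?_⟩
    by_cases hx : x = i
    · subst hx
      cases q with
      | nil => exact absurd rfl hw
      | @cons _ y _ h' q' =>
        exfalso
        have hu' : u = j := hiN u h.symm
        have hy : y = j := hiN y h'
        rw [SimpleGraph.Walk.cons_isPath_iff] at hp
        apply hp.2
        rw [SimpleGraph.Walk.support_cons, List.mem_cons]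
        right
        rw [hu', ← hy]
        exact SimpleGraph.Walk.start_mem_support q'
    · exact ih hp.of_cons hx hw

/-- The inclusion homomorphism from `G.comap Subtype.val` to `G`. -/
def incl (G : SimpleGraph V) (i : V) :
    (G.comap (Subtype.val : {v : V // v ≠ i} → V)) →g G :=
  ⟨Subtype.val, fun h => h⟩

/-- Lift a walk avoiding `i` to the induced graph on `{v // v ≠ i}`. -/
def liftW (G : SimpleGraph V) (i : V) :
    ∀ {u w : V} (p : G.Walk u w) (hs : ∀ x ∈ p.support, x ≠ i),
      (G.comap (Subtype.val : {v : V // v ≠ i} → V)).Walk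
        ⟨u, hs u p.start_mem_support⟩ ⟨w, hs w p.end_mem_support⟩
  | _, _, SimpleGraph.Walk.nil, _ => SimpleGraph.Walk.nil
  | _, _, SimpleGraph.Walk.cons h q, hs =>
      SimpleGraph.Walk.cons (by exact h)
        (liftW G i q fun x hx => hs x (List.mem_cons_of_mem _ hx))

lemma liftW_map (G : SimpleGraph V) (i : V) :
    ∀ {u w : V} (p : G.Walk u w) (hs : ∀ x ∈ p.support, x ≠ i),
      (liftW G i p hs).map (incl G i) = p
  | _, _, SimpleGraph.Walk.nil, _ => rfl
  | _, _, SimpleGraph.Walk.cons h q, hs => by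
      rw [liftW]; exact congrArg (SimpleGraph.Walk.cons h) (liftW_map G i q _)

/-- Removing a leaf from a tree yields a tree. -/
lemma comap_isTree (hG : G.IsTree) (hij : G.Adj i j) (hiN : ∀ x, G.Adj i x → x = j) :
    (G.comap (Subtype.val : {v : V // v ≠ i} → V)).IsTree := by
  constructor
  · rw [connected_iff]
    refine ⟨?_, ⟨⟨j, hij.ne'⟩⟩⟩
    intro a b
    obtain ⟨p, hp, -⟩ := hG.existsUnique_path a.1 b.1
    have hs : ∀ x ∈ p.support, x ≠ i := by
      intro x hx hxi
      subst hxi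
      exact not_mem_support_of_isPath hiN p hp a.2 b.2 hx
    exact ⟨(liftW G i p hs).copy (Subtype.ext rfl) (Subtype.ext rfl)⟩
  · intro a c hc
    exact hG.IsAcyclic (c.map (incl G i))
      ((SimpleGraph.Walk.map_isCycle_iff_of_injective Subtype.val_injective).2 hc)

lemma comap_neighborSet (G : SimpleGraph V) (i : V) (a : {v : V // v ≠ i}) :
    Subtype.val '' ((G.comap (Subtype.val : {v : V // v ≠ i} → V)).neighborSet a)
      = G.neighborSet a.1 \ {i} := by
  ext x
  simp only [Set.mem_image, SimpleGraph.mem_neighborSet, SimpleGraph.comap_adj,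
    Set.mem_diff, Set.mem_singleton_iff]
  constructor
  · rintro ⟨y, hy, rfl⟩
    exact ⟨hy, y.2⟩
  · rintro ⟨hx, hxi⟩
    exact ⟨⟨x, hxi⟩, hx, rfl⟩



/-- Attach a new leaf `i` to vertex `j` of a graph on `{v // v ≠ i}`. -/
def extG (H : SimpleGraph {v : V // v ≠ i}) (j : V) : SimpleGraph V :=
  H.map (⟨Subtype.val, Subtype.val_injective⟩ : {v : V // v ≠ i} ↪ V) ⊔ SimpleGraph.fromEdgeSet {s(i, j)}

lemma extG_adj (H : SimpleGraph {v : V // v ≠ i}) (hij : j ≠ i) {a b : V} :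
    (extG H j).Adj a b ↔
      (∃ (ha : a ≠ i) (hb : b ≠ i), H.Adj ⟨a, ha⟩ ⟨b, hb⟩) ∨
        (a = i ∧ b = j) ∨ (a = j ∧ b = i) := by
  simp only [extG, SimpleGraph.sup_adj, SimpleGraph.map_adj, SimpleGraph.fromEdgeSet_adj,
    Set.mem_singleton_iff, Sym2.eq, Sym2.rel_iff', Prod.mk.injEq, Prod.swap_prod_mk]
  constructor
  · rintro (⟨x, y, hxy, rfl, rfl⟩ | ⟨(⟨rfl, rfl⟩ | ⟨rfl, rfl⟩), -⟩)
    · exact Or.inl ⟨x.2, y.2, hxy⟩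
    · exact Or.inr (Or.inl ⟨rfl, rfl⟩)
    · exact Or.inr (Or.inr ⟨rfl, rfl⟩)
  · rintro (⟨ha, hb, h⟩ | ⟨rfl, rfl⟩ | ⟨rfl, rfl⟩)
    · exact Or.inl ⟨⟨a, ha⟩, ⟨b, hb⟩, h, rfl, rfl⟩
    · exact Or.inr ⟨Or.inl ⟨rfl, rfl⟩, fun h => hij h.symm⟩
    · exact Or.inr ⟨Or.inr ⟨rfl, rfl⟩, hij⟩

lemma extG_adj_i (H : SimpleGraph {v : V // v ≠ i}) (hij : j ≠ i) {x : V} :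
    (extG H j).Adj i x ↔ x = j := by
  rw [extG_adj H hij]
  constructor
  · rintro (⟨ha, -, -⟩ | ⟨-, rfl⟩ | ⟨rfl, -⟩)
    · exact absurd rfl ha
    · rfl
    · exact absurd rfl hij
  · rintro rfl
    exact Or.inr (Or.inl ⟨rfl, rfl⟩)

lemma comap_extG (H : SimpleGraph {v : V // v ≠ i}) (hij : j ≠ i) :
    (extG H j).comap (Subtype.val : {v : V // v ≠ i} → V) = H := by
  ext a b
  rw [SimpleGraph.comap_adj, extG_adj H hij]
  constructor
  · rintro (⟨ha, hb, h⟩ | ⟨hai, -⟩ | ⟨-, hbi⟩)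
    · exact h
    · exact absurd hai a.2
    · exact absurd hbi b.2
  · intro h
    exact Or.inl ⟨a.2, b.2, h⟩

lemma extG_isTree [DecidableEq V] (H : SimpleGraph {v : V // v ≠ i}) (hij : j ≠ i) (hH : H.IsTree) :
    (extG H j).IsTree := by
  have hmapwalk : ∀ a b : {v : V // v ≠ i},
      H.Reachable a b → (extG H j).Reachable a.1 b.1 := by
    intro a b h
    refine h.map ⟨Subtype.val, ?_⟩
    intro x y hxy
    rw [extG_adj H hij]
    exact Or.inl ⟨x.2, y.2, hxy⟩
  have hadjij : (extG H j).Adj i j := (extG_adj_i H hij).2 rfl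
  constructor
  · rw [connected_iff]
    refine ⟨?_, ⟨i⟩⟩
    have hreach : ∀ v : V, (extG H j).Reachable v i := by
      intro v
      by_cases hv : v = i
      · subst hv; rfl
      · exact (hmapwalk ⟨v, hv⟩ ⟨j, hij⟩ (hH.isConnected.preconnected _ _)).trans
          hadjij.symm.reachable
    intro v w
    exact (hreach v).trans (hreach w).symm
  · intro u c hc
    by_cases hi : i ∈ c.support
    · set c' := c.rotate i hi with hc'def
      have hc' : c'.IsCycle := hc.rotate hi
      cases hcc : c' with
      | nil => rw [hcc] at hc'; exact hc'.ne_nil rfl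
      | @cons _ x _ h q =>
        rw [hcc] at hc'
        have hx : x = j := (extG_adj_i H hij).1 h
        rw [SimpleGraph.Walk.cons_isCycle_iff] at hc'
        obtain ⟨hq, he⟩ := hc'
        apply he
        have hnn : ¬ q.reverse.Nil := SimpleGraph.Walk.not_nil_of_ne (fun hxi => h.ne' hxi.symm)
        obtain ⟨y, hy, q', hq'⟩ := SimpleGraph.Walk.not_nil_iff.mp hnn
        have hyj : y = j := (extG_adj_i H hij).1 hy
        have : s(i, y) ∈ q.reverse.edges := by
          rw [hq', SimpleGraph.Walk.edges_cons]
          exact List.mem_cons_self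
        rw [SimpleGraph.Walk.edges_reverse, List.mem_reverse] at this
        rw [show s(i, x) = s(i, y) from by rw [hx, hyj]]
        exact this
    · have hs : ∀ x ∈ c.support, x ≠ i := fun x hx hxi => hi (hxi ▸ hx)
      have hlc := (SimpleGraph.Walk.map_isCycle_iff_of_injective
        (p := liftW (extG H j) i c hs) (f := incl (extG H j) i)
        Subtype.val_injective).1 (by rw [liftW_map]; exact hc)
      have hacy : ((extG H j).comap (Subtype.val : {v : V // v ≠ i} → V)).IsAcyclic := by
        rw [comap_extG H hij]
        exact hH.IsAcyclic
      exact hacy _ hlc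

lemma extG_neighborSet_i (H : SimpleGraph {v : V // v ≠ i}) (hij : j ≠ i) :
    (extG H j).neighborSet i = {j} := by
  ext x
  rw [SimpleGraph.mem_neighborSet, extG_adj_i H hij, Set.mem_singleton_iff]

lemma extG_neighborSet_ne (H : SimpleGraph {v : V // v ≠ i}) (hij : j ≠ i)
    {v : V} (hvi : v ≠ i) (hvj : v ≠ j) :
    (extG H j).neighborSet v = Subtype.val '' (H.neighborSet ⟨v, hvi⟩) := by
  ext x
  simp only [SimpleGraph.mem_neighborSet, Set.mem_image]
  rw [extG_adj H hij]
  constructor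
  · rintro (⟨ha, hb, h⟩ | ⟨hvi', -⟩ | ⟨hvj', -⟩)
    · exact ⟨⟨x, hb⟩, h, rfl⟩
    · exact absurd hvi' hvi
    · exact absurd hvj' hvj
  · rintro ⟨y, hy, rfl⟩
    exact Or.inl ⟨hvi, y.2, hy⟩

lemma extG_neighborSet_j (H : SimpleGraph {v : V // v ≠ i}) (hij : j ≠ i) :
    (extG H j).neighborSet j = insert i (Subtype.val '' (H.neighborSet ⟨j, hij⟩)) := by
  ext x
  simp only [SimpleGraph.mem_neighborSet, Set.mem_insert_iff, Set.mem_image]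
  rw [extG_adj H hij]
  constructor
  · rintro (⟨ha, hb, h⟩ | ⟨hji, -⟩ | ⟨-, rfl⟩)
    · exact Or.inr ⟨⟨x, hb⟩, h, rfl⟩
    · exact absurd hji hij
    · exact Or.inl rfl
  · rintro (rfl | ⟨y, hy, rfl⟩)
    · exact Or.inr (Or.inr ⟨rfl, rfl⟩)
    · exact Or.inl ⟨hij, y.2, hy⟩



lemma tree_deg_pos {W : Type*} [Fintype W] (h2 : 2 ≤ Fintype.card W)
    {G : SimpleGraph W} (hT : G.IsTree) (v : W) : 0 < (G.neighborSet v).ncard := by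
  obtain ⟨w, hw⟩ := Fintype.exists_ne_of_one_lt_card (by omega) v
  obtain ⟨p⟩ := hT.isConnected.preconnected v w
  cases p with
  | nil => exact absurd rfl hw
  | cons h q =>
    rw [Set.ncard_pos (Set.toFinite _)]
    exact ⟨_, h⟩

lemma multinomial_subtype {V : Type*} [Fintype V] [DecidableEq V] (i : V) (g : V → ℕ) :
    Nat.multinomial (Finset.univ : Finset {v : V // v ≠ i}) (fun v => g v.1)
      = Nat.multinomial (Finset.univ.erase i) g := by
  have hmem : ∀ x, x ∈ Finset.univ.erase i ↔ x ≠ i := by simp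
  unfold Nat.multinomial
  rw [Finset.sum_subtype _ hmem g, Finset.prod_subtype _ hmem (fun v => (g v).factorial)]

lemma sum_subtype_ne {V : Type*} [Fintype V] [DecidableEq V] (i : V) (g : V → ℕ) :
    ∑ v : {v : V // v ≠ i}, g v.1 = ∑ v ∈ Finset.univ.erase i, g v := by
  have hmem : ∀ x, x ∈ Finset.univ.erase i ↔ x ≠ i := by simp
  rw [Finset.sum_subtype _ hmem g]



lemma top_isTree {V : Type*} [Fintype V] (hcard : Fintype.card V = 2) :
    (⊤ : SimpleGraph V).IsTree := by
  constructor
  · rw [connected_iff]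
    constructor
    · intro u v
      by_cases h : u = v
      · subst h; rfl
      · exact ((SimpleGraph.top_adj u v).mpr h).reachable
    · rw [← Fintype.card_pos_iff]; omega
  · intro v c hc
    have h3 := hc.three_le_length
    have hle := hc.support_nodup.length_le_card
    have h1 : c.support.length = c.length + 1 := SimpleGraph.Walk.length_support c
    have h2 : c.support.tail.length = c.support.length - 1 := List.length_tail
    omega

lemma base_two {V : Type*} [Fintype V] [DecidableEq V] (hcard : Fintype.card V = 2)
    (d : V → ℕ) (hpos : ∀ v, 1 ≤ d v) (hsum : ∑ v, d v = 2) :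
    Nat.card {G : SimpleGraph V // G.IsTree ∧ ∀ v, (G.neighborSet v).ncard = d v} = 1 := by
  obtain ⟨a, b, hab, hU⟩ := (Nat.card_eq_two_iff (α := V)).mp (by rw [Nat.card_eq_fintype_card, hcard])
  have hall : ∀ c : V, c = a ∨ c = b := by
    intro c
    have hc : c ∈ ({a, b} : Set V) := by rw [hU]; trivial
    simpa using hc
  have hsum2 : d a + d b = 2 := by
    have : (Finset.univ : Finset V) = {a, b} := by
      apply Finset.eq_of_subset_of_card_le
      · intro x _
        rcases hall x with rfl | rfl <;> simp
      · rw [Finset.card_univ, hcard, Finset.card_insert_of_notMem (by simpa using hab),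
          Finset.card_singleton]
    rw [this, Finset.sum_pair hab] at hsum
    exact hsum
  have hd1 : ∀ v, d v = 1 := by
    intro v
    have ha := hpos a
    have hb := hpos b
    rcases hall v with rfl | rfl <;> omega
  have htop : ∀ G : SimpleGraph V,
      (G.IsTree ∧ ∀ v, (G.neighborSet v).ncard = d v) → G = ⊤ := by
    rintro G ⟨hT, -⟩
    ext x y
    rw [SimpleGraph.top_adj]
    constructor
    · exact fun h => h.ne
    · intro hxy
      obtain ⟨p⟩ := hT.isConnected.preconnected x y
      cases p with
      | nil => exact absurd rfl hxy
      | cons h q =>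
        rename_i z
        have hzx : z ≠ x := h.ne'
        have hz : z = y := by
          rcases hall x with rfl | rfl <;> rcases hall z with rfl | rfl <;>
            rcases hall y with rfl | rfl <;> simp_all
        subst hz
        exact h
  have hdegtop : ∀ v, ((⊤ : SimpleGraph V).neighborSet v).ncard = d v := by
    intro v
    rw [hd1]
    have hN : (⊤ : SimpleGraph V).neighborSet v = Set.univ \ {v} := by
      ext w
      simp only [SimpleGraph.mem_neighborSet, SimpleGraph.top_adj, Set.mem_diff,
        Set.mem_univ, true_and, Set.mem_singleton_iff]
      exact ne_comm
    rw [hN, Set.ncard_diff (Set.subset_univ _) (Set.toFinite _), Set.ncard_univ,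
      Nat.card_eq_fintype_card, hcard, Set.ncard_singleton]
  rw [Nat.card_eq_one_iff_unique]
  constructor
  · exact ⟨fun ⟨G, hG⟩ ⟨G', hG'⟩ => Subtype.ext ((htop G hG).trans (htop G' hG').symm)⟩
  · exact ⟨⟨⊤, top_isTree hcard, hdegtop⟩⟩



lemma count_zero {W : Type*} [Fintype W] (h2 : 2 ≤ Fintype.card W) (d' : W → ℕ)
    (w0 : W) (h0 : d' w0 = 0) :
    Nat.card {H : SimpleGraph W // H.IsTree ∧ ∀ v, (H.neighborSet v).ncard = d' v} = 0 := by
  have : IsEmpty {H : SimpleGraph W // H.IsTree ∧ ∀ v, (H.neighborSet v).ncard = d' v} := by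
    refine ⟨fun H => ?_⟩
    have hp := tree_deg_pos h2 H.2.1 w0
    rw [H.2.2 w0, h0] at hp
    exact absurd hp (by omega)
  exact Nat.card_of_isEmpty

lemma count_fixed_leaf {V : Type*} [Fintype V] [DecidableEq V] (d : V → ℕ) (i j : V)
    (hji : j ≠ i) (hdi : d i = 1) (hdj : 1 ≤ d j) :
    Nat.card {G : SimpleGraph V //
        (G.IsTree ∧ ∀ v, (G.neighborSet v).ncard = d v) ∧ G.Adj i j}
      = Nat.card {H : SimpleGraph {v : V // v ≠ i} //
          H.IsTree ∧ ∀ v, (H.neighborSet v).ncard = (if v.1 = j then d j - 1 else d v.1)} := by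
  have hNi : ∀ G : SimpleGraph V, (∀ v, (G.neighborSet v).ncard = d v) → G.Adj i j →
      G.neighborSet i = {j} := by
    intro G hdeg hadj
    obtain ⟨x, hx⟩ := Set.ncard_eq_one.mp (by rw [hdeg i, hdi])
    have hj : j ∈ G.neighborSet i := hadj
    rw [hx] at hj ⊢
    rw [Set.mem_singleton_iff] at hj
    rw [hj]
  have hiN : ∀ G : SimpleGraph V, (∀ v, (G.neighborSet v).ncard = d v) → G.Adj i j →
      ∀ x, G.Adj i x → x = j := by
    intro G hdeg hadj x hx
    have : x ∈ G.neighborSet i := hx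
    rw [hNi G hdeg hadj, Set.mem_singleton_iff] at this
    exact this
  apply Nat.card_congr
  refine ⟨fun G => ⟨G.1.comap Subtype.val,
      comap_isTree G.2.1.1 G.2.2 (hiN G.1 G.2.1.2 G.2.2), fun v => ?_⟩,
    fun H => ⟨extG H.1 j, ⟨extG_isTree H.1 hji H.2.1, fun v => ?_⟩,
      (extG_adj_i H.1 hji).2 rfl⟩, fun G => ?_, fun H => ?_⟩
  · -- degrees of the induced graph
    have himg := comap_neighborSet G.1 i v
    have heq : ((G.1.comap (Subtype.val : {v : V // v ≠ i} → V)).neighborSet v).ncard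
        = (G.1.neighborSet v.1 \ {i}).ncard := by
      rw [← himg, Set.ncard_image_of_injective _ Subtype.val_injective]
    rw [heq]
    by_cases hvj : v.1 = j
    · rw [if_pos hvj]
      have hmem : i ∈ G.1.neighborSet v.1 := by
        rw [SimpleGraph.mem_neighborSet, hvj]
        exact G.2.2.symm
      rw [Set.ncard_diff_singleton_of_mem hmem, G.2.1.2 v.1, hvj]
    · rw [if_neg hvj]
      have hnmem : i ∉ G.1.neighborSet v.1 := by
        intro hmem
        exact hvj (hiN G.1 G.2.1.2 G.2.2 v.1 hmem.symm)
      rw [Set.diff_singleton_eq_self hnmem, G.2.1.2 v.1]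
  · -- degrees of the extended graph
    by_cases hvi : v = i
    · subst hvi
      rw [extG_neighborSet_i _ hji, Set.ncard_singleton, hdi]
    · by_cases hvj : v = j
      · subst hvj
        rw [extG_neighborSet_j _ hji]
        have hnot : i ∉ Subtype.val '' (H.1.neighborSet ⟨v, hji⟩) := by
          rintro ⟨y, -, hy⟩
          exact y.2 hy
        rw [Set.ncard_insert_of_notMem hnot (Set.toFinite _),
          Set.ncard_image_of_injective _ Subtype.val_injective, H.2.2 ⟨v, hji⟩, if_pos rfl]
        omega
      · rw [extG_neighborSet_ne _ hji hvi hvj,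
          Set.ncard_image_of_injective _ Subtype.val_injective, H.2.2 ⟨v, hvi⟩,
          if_neg hvj]
  · -- left inverse
    apply Subtype.ext
    show extG (G.1.comap Subtype.val) j = G.1
    ext a b
    rw [extG_adj _ hji]
    constructor
    · rintro (⟨ha, hb, h⟩ | ⟨rfl, rfl⟩ | ⟨rfl, rfl⟩)
      · exact h
      · exact G.2.2
      · exact G.2.2.symm
    · intro h
      by_cases ha : a = i
      · subst ha
        exact Or.inr (Or.inl ⟨rfl, hiN G.1 G.2.1.2 G.2.2 b h⟩)
      · by_cases hb : b = i
        · subst hb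
          exact Or.inr (Or.inr ⟨hiN G.1 G.2.1.2 G.2.2 a h.symm, rfl⟩)
        · exact Or.inl ⟨ha, hb, h⟩
  · -- right inverse
    exact Subtype.ext (comap_extG H.1 hji)



lemma key (n : ℕ) : ∀ (V : Type) [Fintype V] [DecidableEq V], ∀ d : V → ℕ,
    Fintype.card V = n → 1 ≤ n → (∀ v, 1 ≤ d v) → ∑ v, d v = 2 * (n - 1) →
    Nat.card {G : SimpleGraph V // G.IsTree ∧ ∀ v, (G.neighborSet v).ncard = d v} =
      Nat.multinomial Finset.univ (fun v => d v - 1) := by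
  induction n with
  | zero => intro V _ _ d _ h1 _ _; omega
  | succ n ih =>
    intro V _ _ d hcard _ hpos hsum
    by_cases hn0 : n = 0
    · -- card V = 1 : vacuous, since ∑ d = 0 is impossible
      exfalso
      subst hn0
      obtain ⟨v⟩ : Nonempty V := Fintype.card_pos_iff.mp (by omega)
      have h1 := Finset.single_le_sum (f := d) (fun x _ => Nat.zero_le _) (Finset.mem_univ v)
      have := hpos v
      simp only [Nat.add_sub_cancel, mul_zero] at hsum
      omega
    · by_cases hn1 : n = 1
      · -- card V = 2 : base case
        subst hn1
        have hsum2 : ∑ v, d v = 2 := by simpa using hsum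
        have hd1 : ∀ v, d v = 1 := by
          intro v
          obtain ⟨w, hw⟩ := Fintype.exists_ne_of_one_lt_card (by omega) v
          have hsub := Finset.sum_le_sum_of_subset (f := d)
            (Finset.subset_univ ({v, w} : Finset V))
          rw [Finset.sum_pair (fun h : v = w => hw h.symm), hsum2] at hsub
          have := hpos v
          have := hpos w
          omega
        have hzero : (fun v : V => d v - 1) = fun _ => 0 := funext fun v => by rw [hd1 v]
        rw [hzero, base_two hcard d hpos hsum2]
        simp [Nat.multinomial]
      · -- main inductive step : card V = n + 1, n ≥ 2
        have hn2 : 2 ≤ n := by omega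
        classical
        have hsum' : ∑ v, d v = 2 * n := by omega
        -- find a leaf
        obtain ⟨i, hdi⟩ : ∃ i, d i = 1 := by
          by_contra hc
          push_neg at hc
          have h2 : ∀ v ∈ Finset.univ, 2 ≤ d v := fun v _ => by
            have := hpos v; have := hc v; omega
          have hub : (Finset.univ : Finset V).card * 2 ≤ ∑ v, d v := by
            simpa [smul_eq_mul] using Finset.card_nsmul_le_sum Finset.univ d 2 h2
          rw [Finset.card_univ, hcard] at hub
          omega
        have hcardV' : Fintype.card {v : V // v ≠ i} = n := by
          have h1 : Fintype.card {v : V // v ≠ i}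
              = (Finset.univ.filter (fun v : V => v ≠ i)).card := Fintype.card_subtype _
          have h2 : Finset.univ.filter (fun v : V => v ≠ i) = Finset.univ.erase i := by
            ext x; simp [Finset.mem_erase, and_comm]
          rw [h1, h2, Finset.card_erase_of_mem (Finset.mem_univ i), Finset.card_univ, hcard]
          omega
        set a : V → ℕ := fun v => d v - 1 with ha
        have hai : a i = 0 := by rw [ha]; simp [hdi]
        have erase_sum : d i + ∑ x ∈ Finset.univ.erase i, d x = ∑ v, d v :=
          Finset.add_sum_erase _ d (Finset.mem_univ i)
        -- partition according to the neighbour of the leaf i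
        rw [Nat.card_eq_fintype_card, Fintype.card_subtype]
        have hpart : Finset.univ.filter
            (fun G : SimpleGraph V => G.IsTree ∧ ∀ v, (G.neighborSet v).ncard = d v)
            = (Finset.univ.erase i).biUnion (fun j => Finset.univ.filter
              (fun G : SimpleGraph V =>
                (G.IsTree ∧ ∀ v, (G.neighborSet v).ncard = d v) ∧ G.Adj i j)) := by
          ext G
          simp only [Finset.mem_filter, Finset.mem_biUnion, Finset.mem_erase,
            Finset.mem_univ, true_and]
          constructor
          · intro hG
            obtain ⟨x, hx⟩ := Set.ncard_eq_one.mp (by rw [hG.2 i, hdi])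
            have hadj : G.Adj i x := by
              have : x ∈ G.neighborSet i := by rw [hx]; exact rfl
              exact this
            refine ⟨x, ?_, hG, hadj⟩
            simp [hadj.ne']
          · rintro ⟨j, -, hG, -⟩
            exact hG
        have hdisj : ∀ j1 ∈ Finset.univ.erase i, ∀ j2 ∈ Finset.univ.erase i, j1 ≠ j2 →
            Disjoint (Finset.univ.filter (fun G : SimpleGraph V =>
                (G.IsTree ∧ ∀ v, (G.neighborSet v).ncard = d v) ∧ G.Adj i j1))
              (Finset.univ.filter (fun G : SimpleGraph V =>
                (G.IsTree ∧ ∀ v, (G.neighborSet v).ncard = d v) ∧ G.Adj i j2)) := by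
          intro j1 _ j2 _ hne
          rw [Finset.disjoint_left]
          intro G hG1 hG2
          simp only [Finset.mem_filter, Finset.mem_univ, true_and] at hG1 hG2
          obtain ⟨x, hx⟩ := Set.ncard_eq_one.mp (by rw [hG1.1.2 i, hdi])
          have h1 : j1 ∈ G.neighborSet i := hG1.2
          have h2 : j2 ∈ G.neighborSet i := hG2.2
          rw [hx, Set.mem_singleton_iff] at h1 h2
          exact hne (h1.trans h2.symm)
        rw [hpart, Finset.card_biUnion hdisj]
        have hterm : ∀ j ∈ Finset.univ.erase i,
            (Finset.univ.filter (fun G : SimpleGraph V =>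
              (G.IsTree ∧ ∀ v, (G.neighborSet v).ncard = d v) ∧ G.Adj i j)).card
            = if 1 ≤ a j then
                Nat.multinomial (Finset.univ.erase i) (Function.update a j (a j - 1))
              else 0 := by
          intro j hj
          have hji : j ≠ i := (Finset.mem_erase.mp hj).1
          have hcount : (Finset.univ.filter (fun G : SimpleGraph V =>
              (G.IsTree ∧ ∀ v, (G.neighborSet v).ncard = d v) ∧ G.Adj i j)).card
              = Nat.card {G : SimpleGraph V //
                  (G.IsTree ∧ ∀ v, (G.neighborSet v).ncard = d v) ∧ G.Adj i j} := by
            rw [Nat.card_eq_fintype_card, Fintype.card_subtype]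
          rw [hcount, count_fixed_leaf d i j hji hdi (hpos j)]
          by_cases hdj2 : 2 ≤ d j
          · rw [if_pos (show 1 ≤ a j by rw [ha]; simp; omega)]
            have hposd' : ∀ v : {v : V // v ≠ i},
                1 ≤ (if v.1 = j then d j - 1 else d v.1) := by
              intro v
              split
              · omega
              · exact hpos _
            have hjmem : j ∈ Finset.univ.erase i :=
              Finset.mem_erase.mpr ⟨hji, Finset.mem_univ j⟩
            have hsumd' : ∑ v : {v : V // v ≠ i},
                (if v.1 = j then d j - 1 else d v.1) = 2 * (n - 1) := by
              rw [sum_subtype_ne i (fun x => if x = j then d j - 1 else d x),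
                ← Finset.add_sum_erase _ _ hjmem, if_pos rfl]
              have hcongr : ∑ x ∈ (Finset.univ.erase i).erase j,
                  (if x = j then d j - 1 else d x)
                  = ∑ x ∈ (Finset.univ.erase i).erase j, d x :=
                Finset.sum_congr rfl fun x hx => if_neg (Finset.mem_erase.mp hx).1
              rw [hcongr]
              have e1 : d j + ∑ x ∈ (Finset.univ.erase i).erase j, d x
                  = ∑ x ∈ Finset.univ.erase i, d x := Finset.add_sum_erase _ d hjmem
              omega
            rw [ih {v : V // v ≠ i} (fun v => if v.1 = j then d j - 1 else d v.1)
              hcardV' (by omega) hposd' hsumd']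
            have hfun : (fun v : {v : V // v ≠ i} =>
                (if v.1 = j then d j - 1 else d v.1) - 1)
                = fun v => (Function.update a j (a j - 1)) v.1 := by
              funext v
              rw [Function.update_apply]
              by_cases h : v.1 = j
              · rw [if_pos h, if_pos h, ha]
              · rw [if_neg h, if_neg h, ha]
            rw [hfun]
            exact multinomial_subtype i (Function.update a j (a j - 1))
          · rw [if_neg (show ¬ 1 ≤ a j by rw [ha]; simp; omega)]
            have hdj1 : d j = 1 := by have := hpos j; omega
            exact count_zero (by omega) _ ⟨j, hji⟩ (by simp [hdj1])
        rw [Finset.sum_congr rfl hterm]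
        have hposs : 0 < ∑ v ∈ Finset.univ.erase i, a v := by
          obtain ⟨j0, hj0mem, hj02⟩ : ∃ j0 ∈ Finset.univ.erase i, 2 ≤ d j0 := by
            by_contra hc
            push_neg at hc
            have hall1 : ∀ x ∈ Finset.univ.erase i, d x = 1 := fun x hx => by
              have := hpos x; have := hc x hx; omega
            have hs1 : ∑ x ∈ Finset.univ.erase i, d x = (Finset.univ.erase i).card := by
              rw [Finset.sum_congr rfl hall1]; simp
            have hce : (Finset.univ.erase i).card = n := by
              rw [Finset.card_erase_of_mem (Finset.mem_univ i), Finset.card_univ, hcard]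
              omega
            omega
          have hle := Finset.single_le_sum (f := a) (fun x _ => Nat.zero_le _) hj0mem
          have : a j0 = d j0 - 1 := rfl
          omega
        rw [multinomial_rec _ a hposs]
        have hins : (Finset.univ : Finset V) = insert i (Finset.univ.erase i) :=
          (Finset.insert_erase (Finset.mem_univ i)).symm
        have hfin : Nat.multinomial Finset.univ a
            = Nat.multinomial (Finset.univ.erase i) a := by
          conv_lhs => rw [hins]
          rw [Nat.multinomial_insert (Finset.notMem_erase i _), hai,
            Nat.choose_zero_right, one_mul]
        rw [← hfin]



end MoonAux

/-- Moon's theorem on labeled trees with prescribed degrees: for `m ≥ 2` and positive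
integers `d₁, …, d_m`, the number of trees on the vertex set `{1, …, m}` in which
vertex `i` has degree `d i` is the multinomial coefficient
`(m−2)!/((d₁−1)!⋯(d_m−1)!)` if `∑ d i = 2(m−1)`, and `0` otherwise. -/
theorem moon_tree_degree_count (m : ℕ) (hm : 2 ≤ m) (d : Fin m → ℕ)
    (hd : ∀ i, 1 ≤ d i) :
    Nat.card {G : SimpleGraph (Fin m) // G.IsTree ∧ ∀ v, (G.neighborSet v).ncard = d v} =
      if ∑ i, d i = 2 * (m - 1) then
        (m - 2).factorial / ∏ i, (d i - 1).factorial
      else 0 := by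
  by_cases hsum : ∑ i, d i = 2 * (m - 1)
  · rw [if_pos hsum, MoonAux.key m (Fin m) d (Fintype.card_fin m) (by omega) hd hsum]
    have hsub : ∑ i, (d i - 1) = m - 2 := by
      have h1 : ∑ i : Fin m, (d i - 1) + ∑ _i : Fin m, 1 = ∑ i : Fin m, d i := by
        rw [← Finset.sum_add_distrib]
        exact Finset.sum_congr rfl fun i _ => by have := hd i; omega
      have h2 : ∑ _i : Fin m, (1 : ℕ) = m := by simp
      omega
    unfold Nat.multinomial
    rw [hsub]
  · rw [if_neg hsum]
    classical
    have : IsEmpty {G : SimpleGraph (Fin m) //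
        G.IsTree ∧ ∀ v, (G.neighborSet v).ncard = d v} := by
      refine ⟨fun GG => hsum ?_⟩
      obtain ⟨G, hT, hdeg⟩ := GG
      have hdeg' : ∀ v, d v = G.degree v := by
        intro v
        rw [← hdeg v, Set.ncard_eq_toFinset_card', Set.toFinset_card,
          SimpleGraph.card_neighborSet_eq_degree]
      have hs := SimpleGraph.sum_degrees_eq_twice_card_edges G
      have he := hT.card_edgeFinset
      rw [Fintype.card_fin] at he
      have hsd : ∑ i, d i = ∑ v, G.degree v := Finset.sum_congr rfl fun v _ => hdeg' v
      omega
    rw [Nat.card_of_isEmpty]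
end

section
/- (Cycle lemma of Dvoretzky–Motzkin–Raney.) Let n and k be positive integers and let a_1, a_2, …, a_n be integers, each greater than or equal to −1, with a_1 + a_2 + ⋯ + a_n = −k. Then there are exactly k indices i with 1 ≤ i ≤ n such that the cyclic rotation a_i, a_{i+1}, …, a_n, a_1, …, a_{i−1} has all of its partial sums negative, i.e., the sum of the first t terms of the rotated sequence is negative for every t with 1 ≤ t ≤ n. -/
/-- Iterating periodicity: if `S` drops by `k` over each period `n`, then it drops
by `q*k` over `q` periods. -/
lemma cycle_lemma_aux_down (n k : ℕ) (S : ℕ → ℤ)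
    (hper : ∀ m, S (m + n) = S m - k) :
    ∀ q m, S (m + q * n) = S m - q * k := by
  intro q
  induction q with
  | zero => simp
  | succ q ih =>
    intro m
    have : m + (q + 1) * n = (m + q * n) + n := by ring
    rw [this, hper, ih]
    push_cast
    ring

/-- Being a strict record from the right is equivalent to the window condition. -/
lemma cycle_lemma_aux_rec_iff (n k : ℕ) (hn : 0 < n) (S : ℕ → ℤ)
    (hper : ∀ m, S (m + n) = S m - k) (i : ℕ) :
    (∀ m, i < m → S m < S i) ↔ (∀ t, 1 ≤ t → t ≤ n → S (i + t) < S i) := by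
  constructor
  · intro h t ht _
    exact h (i + t) (by omega)
  · intro h m him
    set d := m - i with hd
    have hd1 : 1 ≤ d := by omega
    set q := (d - 1) / n with hq
    set t := (d - 1) % n + 1 with ht
    have ht1 : 1 ≤ t := by omega
    have htn : t ≤ n := by
      have := Nat.mod_lt (d - 1) hn
      omega
    have hdecomp : d = t + q * n := by
      have h := Nat.mod_add_div' (d - 1) n
      rw [← hq] at h
      omega
    have hm : m = (i + t) + q * n := by omega
    have := cycle_lemma_aux_down n k S hper q (i + t)
    rw [hm, this]
    have hqk : (0 : ℤ) ≤ (q : ℤ) * (k : ℤ) := by positivity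
    have := h t ht1 htn
    omega

/-- Core counting lemma: a function `S : ℕ → ℤ` which decreases by at most `1` at
each step and drops by exactly `k` over each period `n` has exactly `k` strict
right-records among any `[0, n)`. -/
lemma cycle_lemma_aux (n k : ℕ) (hn : 0 < n) (hk : 0 < k) (S : ℕ → ℤ)
    (hstep : ∀ m, S m - 1 ≤ S (m + 1))
    (hper : ∀ m, S (m + n) = S m - k) :
    {i : ℕ | i < n ∧ ∀ m, i < m → S m < S i}.ncard = k := by
  have hdown := cycle_lemma_aux_down n k S hper
  -- the sup of S over one period bounds S everywhere
  have hrange : (Finset.range n).Nonempty := ⟨0, Finset.mem_range.mpr hn⟩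
  set B := (Finset.range n).sup' hrange S with hB
  have hBle : ∀ m, S m ≤ B - (m / n : ℕ) * k := by
    intro m
    have h1 : S (m % n) ≤ B := Finset.le_sup' S (Finset.mem_range.mpr (Nat.mod_lt m hn))
    have h2 : S m = S (m % n) - (m / n : ℕ) * k := by
      have := hdown (m / n) (m % n)
      rwa [Nat.mod_add_div' m n] at this
    omega
  have hB0 : ∀ m, S m ≤ B := by
    intro m
    have := hBle m
    have : (0 : ℤ) ≤ (m / n : ℕ) * (k : ℤ) := by positivity
    omega
  -- the last attainment of the maximum B; it lies in [0, n)
  obtain ⟨r, hrmem, hrB⟩ := Finset.exists_mem_eq_sup' hrange S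
  set F := (Finset.range n).filter (fun m => S m = B) with hF
  have hFne : F.Nonempty := ⟨r, by simp [hF, hrmem, hrB.symm, hB]⟩
  set r₀ := F.max' hFne with hr₀
  have hr₀mem : r₀ ∈ F := F.max'_mem hFne
  have hr₀n : r₀ < n := by
    have := (Finset.mem_filter.mp hr₀mem).1
    simpa using this
  have hSr₀ : S r₀ = B := (Finset.mem_filter.mp hr₀mem).2
  have hrec₀ : ∀ m, r₀ < m → S m < B := by
    intro m hm
    by_cases hmn : m < n
    · have h1 : S m ≤ B := hB0 m
      rcases lt_or_eq_of_le h1 with h | h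
      · exact h
      · exfalso
        have : m ∈ F := Finset.mem_filter.mpr ⟨Finset.mem_range.mpr hmn, h⟩
        have := F.le_max' m this
        omega
    · have h1 := hBle m
      have h2 : 1 ≤ m / n := (Nat.one_le_div_iff hn).mpr (by omega)
      have h3 : (k : ℤ) ≤ (m / n : ℕ) * k := by
        have : (1 : ℤ) ≤ (m / n : ℕ) := by exact_mod_cast h2
        nlinarith [Int.ofNat_nonneg k]
      omega
  -- records shift by n
  have hshift_up : ∀ i, (∀ m, i < m → S m < S i) → (∀ m, i + n < m → S m < S (i + n)) := by
    intro i hi m hm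
    have h1 : S (m - n + n) = S (m - n) - k := hper (m - n)
    have h2 : m - n + n = m := by omega
    rw [h2] at h1
    have h3 : S (m - n) < S i := hi (m - n) (by omega)
    have h4 : S (i + n) = S i - k := hper i
    omega
  have hshift_down : ∀ i, n ≤ i → (∀ m, i < m → S m < S i) → (∀ m, i - n < m → S m < S (i - n)) := by
    intro i hni hi m hm
    have h1 : S (m + n) = S m - k := hper m
    have h2 : S (m + n) < S i := hi (m + n) (by omega)
    have h3 : S (i - n + n) = S (i - n) - k := hper (i - n)
    have h4 : i - n + n = i := by omega
    rw [h4] at h3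
    omega
  -- no records strictly below r₀
  have hno_below : ∀ i, i < r₀ → ¬ (∀ m, i < m → S m < S i) := by
    intro i hi hrec
    have h1 : S r₀ < S i := hrec r₀ hi
    have h2 : S i ≤ B := hB0 i
    omega
  -- the record set in [0,n) equals the record set in [r₀, r₀+n)
  have hset_eq : {i : ℕ | i < n ∧ ∀ m, i < m → S m < S i}
      = {i : ℕ | (∀ m, i < m → S m < S i) ∧ r₀ ≤ i ∧ i < r₀ + n} := by
    ext i
    simp only [Set.mem_setOf_eq]
    constructor
    · rintro ⟨hin, hrec⟩
      refine ⟨hrec, ?_, by omega⟩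
      by_contra h
      exact hno_below i (by omega) hrec
    · rintro ⟨hrec, hle, hlt⟩
      refine ⟨?_, hrec⟩
      by_contra h
      have hni : n ≤ i := by omega
      have := hshift_down i hni hrec
      exact hno_below (i - n) (by omega) this
  rw [hset_eq]
  set E := {i : ℕ | (∀ m, i < m → S m < S i) ∧ r₀ ≤ i ∧ i < r₀ + n} with hE
  -- S is injective on E
  have hinj : Set.InjOn S E := by
    intro i hi j hj hij
    by_contra hne
    rcases Nat.lt_or_ge i j with h | h
    · have := hi.1 j h; omega
    · have hji : j < i := by omega
      have := hj.1 i hji; omega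
  -- image of E under S is Ioc (B - k) B
  have himg : S '' E = Set.Ioc (B - k) B := by
    ext v
    simp only [Set.mem_image, Set.mem_Ioc]
    constructor
    · rintro ⟨i, ⟨hrec, hle, hlt⟩, rfl⟩
      refine ⟨?_, hB0 i⟩
      have h1 : S (r₀ + n) < S i := hrec (r₀ + n) hlt
      have h2 : S (r₀ + n) = B - k := by rw [hper, hSr₀]
      omega
    · rintro ⟨hv1, hv2⟩
      -- take the last m with v ≤ S m
      set N := ((B - v).toNat + 1) * n with hN
      have hNbig : ∀ m, N ≤ m → S m < v := by
        intro m hm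
        have hdiv : (B - v).toNat + 1 ≤ m / n := Nat.le_div_iff_mul_le hn |>.mpr (by omega)
        have h1 := hBle m
        have h2 : ((B - v).toNat + 1 : ℤ) ≤ (m / n : ℕ) := by exact_mod_cast hdiv
        have h3 : (B - v) + 1 ≤ ((B - v).toNat + 1 : ℤ) := by
          have := Int.self_le_toNat (B - v); omega
        have h4 : ((m / n : ℕ) : ℤ) ≤ (m / n : ℕ) * k := by
          nlinarith [Int.ofNat_nonneg (m / n), Int.ofNat_nonneg k]
        omega
      set A := (Finset.range N).filter (fun m => v ≤ S m) with hA
      have hr₀A : r₀ ∈ A := by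
        refine Finset.mem_filter.mpr ⟨Finset.mem_range.mpr ?_, by rw [hSr₀]; exact hv2⟩
        calc r₀ < n := hr₀n
        _ ≤ N := Nat.le_mul_of_pos_left n (by omega)
      have hAne : A.Nonempty := ⟨r₀, hr₀A⟩
      set i := A.max' hAne with hi
      have himem : i ∈ A := A.max'_mem hAne
      have hiN : i < N := Finset.mem_range.mp (Finset.mem_filter.mp himem).1
      have hvSi : v ≤ S i := (Finset.mem_filter.mp himem).2
      have hrec : ∀ m, i < m → S m < S i := by
        intro m hm
        by_cases hmN : m < N
        · by_cases hmA : m ∈ A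
          · exact absurd (A.le_max' m hmA) (by omega)
          · have : ¬ v ≤ S m := fun h => hmA (Finset.mem_filter.mpr ⟨Finset.mem_range.mpr hmN, h⟩)
            omega
        · have := hNbig m (by omega); omega
      have hSiv : S i = v := by
        by_contra h
        have h1 : v + 1 ≤ S i := by omega
        have h2 : v ≤ S (i + 1) := by have := hstep i; omega
        have h3 : i + 1 < N := by
          rcases Nat.lt_or_ge (i + 1) N with h | h
          · exact h
          · exact absurd h2 (by have := hNbig (i + 1) h; omega)
        have : i + 1 ∈ A := Finset.mem_filter.mpr ⟨Finset.mem_range.mpr h3, h2⟩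
        have := A.le_max' (i + 1) this
        omega
      have hr₀i : r₀ ≤ i := A.le_max' r₀ hr₀A
      have hilt : i < r₀ + n := by
        by_contra h
        have hni : n ≤ i := by omega
        have h1 := hBle i
        have h2 : 1 ≤ i / n := (Nat.one_le_div_iff hn).mpr hni
        have h3 : (k : ℤ) ≤ (i / n : ℕ) * k := by
          have : (1 : ℤ) ≤ (i / n : ℕ) := by exact_mod_cast h2
          nlinarith [Int.ofNat_nonneg k]
        omega
      exact ⟨i, ⟨hrec, hr₀i, hilt⟩, hSiv⟩
  have hcard : (S '' E).ncard = E.ncard := Set.ncard_image_of_injOn hinj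
  rw [himg] at hcard
  rw [← hcard]
  rw [← Finset.coe_Ioc, Set.ncard_coe_finset, Int.card_Ioc]
  omega

/-- The cycle lemma of Dvoretzky–Motzkin–Raney: if `a₁, …, aₙ` are integers `≥ −1`
with sum `−k < 0`, then there are exactly `k` indices `i` such that the cyclic
rotation starting at `i` has all of its partial sums negative. -/
theorem cycle_lemma (n k : ℕ) (hn : 0 < n) (hk : 0 < k) (a : Fin n → ℤ)
    (ha : ∀ i, -1 ≤ a i) (hsum : ∑ i, a i = -(k : ℤ)) :
    {i : Fin n | ∀ t : ℕ, 1 ≤ t → t ≤ n →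
        (∑ s ∈ Finset.range t, a ⟨((i : ℕ) + s) % n, Nat.mod_lt _ hn⟩) < 0}.ncard = k := by
  set S : ℕ → ℤ := fun m => ∑ j ∈ Finset.range m, a ⟨j % n, Nat.mod_lt _ hn⟩ with hS
  have hstep : ∀ m, S m - 1 ≤ S (m + 1) := by
    intro m
    have : S (m + 1) = S m + a ⟨m % n, Nat.mod_lt _ hn⟩ := Finset.sum_range_succ _ m
    have := ha ⟨m % n, Nat.mod_lt _ hn⟩
    omega
  have hSn : S n = -(k : ℤ) := by
    rw [← hsum]
    rw [show S n = ∑ j ∈ Finset.range n, a ⟨j % n, Nat.mod_lt _ hn⟩ from rfl]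
    rw [← Fin.sum_univ_eq_sum_range (fun j => a ⟨j % n, Nat.mod_lt _ hn⟩) n]
    apply Finset.sum_congr rfl
    intro i _
    congr 1
    exact Fin.ext (Nat.mod_eq_of_lt i.isLt)
  have hper : ∀ m, S (m + n) = S m - k := by
    intro m
    induction m with
    | zero => simpa [show S 0 = 0 from rfl] using hSn
    | succ m ih =>
      have h1 : S (m + 1 + n) = S (m + n) + a ⟨(m + n) % n, Nat.mod_lt _ hn⟩ := by
        have : m + 1 + n = (m + n) + 1 := by omega
        rw [this]
        exact Finset.sum_range_succ _ (m + n)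
      have h2 : S (m + 1) = S m + a ⟨m % n, Nat.mod_lt _ hn⟩ := Finset.sum_range_succ _ m
      have h3 : (m + n) % n = m % n := Nat.add_mod_right m n
      rw [h1, h2, ih]
      simp [h3]
      ring
  -- window sums in terms of S
  have hwin : ∀ (i : Fin n) (t : ℕ),
      (∑ s ∈ Finset.range t, a ⟨((i : ℕ) + s) % n, Nat.mod_lt _ hn⟩) = S ((i : ℕ) + t) - S i := by
    intro i t
    have h : S ((i : ℕ) + t) = S (i : ℕ) +
        ∑ s ∈ Finset.range t, a ⟨((i : ℕ) + s) % n, Nat.mod_lt _ hn⟩ :=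
      Finset.sum_range_add (fun j => a ⟨j % n, Nat.mod_lt _ hn⟩) (i : ℕ) t
    linarith
  -- the set in the statement corresponds to the record set
  have hval : Fin.val '' {i : Fin n | ∀ t : ℕ, 1 ≤ t → t ≤ n →
        (∑ s ∈ Finset.range t, a ⟨((i : ℕ) + s) % n, Nat.mod_lt _ hn⟩) < 0}
      = {i : ℕ | i < n ∧ ∀ m, i < m → S m < S i} := by
    ext x
    simp only [Set.mem_image, Set.mem_setOf_eq]
    constructor
    · rintro ⟨i, hi, rfl⟩
      refine ⟨i.isLt, ?_⟩
      rw [cycle_lemma_aux_rec_iff n k hn S hper]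
      intro t ht1 htn
      have := hi t ht1 htn
      rw [hwin i t] at this
      omega
    · rintro ⟨hx, hrec⟩
      refine ⟨⟨x, hx⟩, ?_, rfl⟩
      intro t ht1 htn
      rw [hwin ⟨x, hx⟩ t]
      rw [cycle_lemma_aux_rec_iff n k hn S hper] at hrec
      have := hrec t ht1 htn
      simp only at this ⊢
      omega
  have := cycle_lemma_aux n k hn hk S hstep hper
  rw [← hval] at this
  rwa [Set.ncard_image_of_injective _ Fin.val_injective] at this
end
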